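/- arXiv:1405.5076 — 7 statements merged into one kernel-verified Lean document; each statement's English description precedes it below -/
import Mathlib

section
/- Let F be a concave function from an open convex set U in a normed linear space into the bounded self-adjoint operators on a Hilbert space (with the operator order). If F is bounded from below (by a scalar multiple of the identity) on a neighborhood of one point of U, then F is locally bounded (above and below by scalar multiples of the identity) at every point of U. -/
open Metric

set_option maxHeartbeats 1600000

section Helpers

open ContinuousLinearMap RCLike
open scoped InnerProductSpace

variable {E : Type*} [NormedAddCommGroup E] [InnerProductSpace ℂ E] [CompleteSpace E]

private lemma re_smul_inner' (c : ℝ) (v w : E) : re (⟪c • v, w⟫_ℂ) = c * re (⟪v, w⟫_ℂ) := by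
  rw [real_smul_eq_coe_smul (K := ℂ), inner_smul_real_left]
  simp

private lemma sa_smul' {c : ℝ} {A : E →L[ℂ] E} (hA : IsSelfAdjoint A) :
    IsSelfAdjoint (c • A) := by
  rw [isSelfAdjoint_iff_isSymmetric] at *
  intro x y
  have h := hA x y
  rw [ContinuousLinearMap.coe_coe, coe_smul', Pi.smul_apply, Pi.smul_apply,
    real_smul_eq_coe_smul (K := ℂ) c, real_smul_eq_coe_smul (K := ℂ) c,
    inner_smul_real_left, inner_smul_real_right] at *
  rw [h]

private lemma pos_smul' {c : ℝ} (hc : 0 ≤ c) {A : E →L[ℂ] E} (hA : A.IsPositive) :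
    (c • A).IsPositive := by
  refine ⟨isSelfAdjoint_iff_isSymmetric.mp (sa_smul' hA.isSelfAdjoint), fun v => ?_⟩
  have := hA.2 v
  simp only [reApplyInnerSelf, coe_smul', Pi.smul_apply, re_smul_inner'] at *
  positivity

private lemma le_norm_one' {T : E →L[ℂ] E} (hT : IsSelfAdjoint T) :
    (‖T‖ • (1 : E →L[ℂ] E) - T).IsPositive := by
  refine ⟨isSelfAdjoint_iff_isSymmetric.mp ((sa_smul' (IsSelfAdjoint.one _)).sub hT), fun v => ?_⟩
  have h1 : re (⟪T v, v⟫_ℂ) ≤ ‖T‖ * (‖v‖ * ‖v‖) := by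
    calc re (⟪T v, v⟫_ℂ) ≤ ‖(⟪T v, v⟫_ℂ)‖ := re_le_norm _
    _ ≤ ‖T v‖ * ‖v‖ := norm_inner_le_norm _ _
    _ ≤ ‖T‖ * (‖v‖ * ‖v‖) := by
        have := T.le_opNorm v
        nlinarith [norm_nonneg v, norm_nonneg (T v)]
  simp only [reApplyInnerSelf, sub_apply, coe_smul', Pi.smul_apply, one_apply_eq_self,
    inner_sub_left, map_sub, re_smul_inner', inner_self_eq_norm_mul_norm]
  linarith

private lemma neg_norm_le' {T : E →L[ℂ] E} (hT : IsSelfAdjoint T) :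
    (T + ‖T‖ • (1 : E →L[ℂ] E)).IsPositive := by
  refine ⟨isSelfAdjoint_iff_isSymmetric.mp (hT.add (sa_smul' (IsSelfAdjoint.one _))), fun v => ?_⟩
  have h1 : -re (⟪T v, v⟫_ℂ) ≤ ‖T‖ * (‖v‖ * ‖v‖) := by
    calc -re (⟪T v, v⟫_ℂ) = re (-⟪T v, v⟫_ℂ) := by simp
    _ ≤ ‖-⟪T v, v⟫_ℂ‖ := re_le_norm _
    _ = ‖(⟪T v, v⟫_ℂ)‖ := norm_neg _
    _ ≤ ‖T v‖ * ‖v‖ := norm_inner_le_norm _ _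
    _ ≤ ‖T‖ * (‖v‖ * ‖v‖) := by
        have := T.le_opNorm v
        nlinarith [norm_nonneg v, norm_nonneg (T v)]
  simp only [reApplyInnerSelf, add_apply, coe_smul', Pi.smul_apply, one_apply_eq_self,
    inner_add_left, map_add, re_smul_inner', inner_self_eq_norm_mul_norm]
  linarith

end Helpers

/-- A concave function from an open convex subset `U` of a normed linear space into the
self-adjoint operators on a Hilbert space which is bounded below (by a scalar multiple of
the identity) near one point of `U` is locally bounded, above and below by scalar multiples
of the identity, at every point of `U`. -/
theorem concave_locally_bounded
    {V : Type*} [NormedAddCommGroup V] [NormedSpace ℝ V]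
    {E : Type*} [NormedAddCommGroup E] [InnerProductSpace ℂ E] [CompleteSpace E]
    (U : Set V) (hUopen : IsOpen U) (hUconv : Convex ℝ U)
    (F : V → (E →L[ℂ] E))
    (hsa : ∀ x ∈ U, IsSelfAdjoint (F x))
    (hconc : ∀ x ∈ U, ∀ y ∈ U, ∀ l : ℝ, 0 ≤ l → l ≤ 1 →
      (F ((1 - l) • x + l • y) - ((1 - l) • F x + l • F y)).IsPositive)
    (a : V) (ha : a ∈ U) (r : ℝ) (hr : 0 < r) (hball : ball a r ⊆ U)
    (M : ℝ) (hbelow : ∀ x ∈ ball a r, (F x - M • (1 : E →L[ℂ] E)).IsPositive) :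
    ∀ x ∈ U, ∃ ρ > 0, ball x ρ ⊆ U ∧ ∃ m M' : ℝ, ∀ y ∈ ball x ρ,
      (F y - m • (1 : E →L[ℂ] E)).IsPositive ∧
      (M' • (1 : E →L[ℂ] E) - F y).IsPositive := by
  intro x hx
  obtain ⟨ε, hε, hballx⟩ := Metric.isOpen_iff.mp hUopen x hx
  have hd : (0:ℝ) < 2 * (‖x - a‖ + 1) := by positivity
  set δ : ℝ := ε / (2 * (‖x - a‖ + 1)) with hδ
  have hδpos : 0 < δ := by positivity
  set t : ℝ := 1 + δ with htdef
  have ht1 : 1 < t := by simp [htdef, hδpos]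
  have ht0 : (0:ℝ) < t := by linarith
  set w : V := a + t • (x - a) with hwdef
  have hwx : ‖w - x‖ < ε := by
    have h1 : w - x = (t - 1) • (x - a) := by rw [hwdef]; module
    rw [h1, norm_smul, Real.norm_eq_abs, abs_of_pos (by linarith)]
    have h2 : t - 1 = δ := by rw [htdef]; ring
    rw [h2, hδ]
    rw [div_mul_eq_mul_div, div_lt_iff₀ hd]
    nlinarith [norm_nonneg (x - a)]
  have hwU : w ∈ U := hballx (by rwa [mem_ball, dist_eq_norm])
  set l : ℝ := 1 / t with hl
  have hl0 : 0 < l := by positivity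
  have hl1 : l < 1 := by rw [hl]; rw [div_lt_one ht0]; exact ht1
  have h1l : 0 < 1 - l := by linarith
  set ρ : ℝ := (1 - l) * r with hρdef
  have hρ : 0 < ρ := by positivity
  have hlt : l * t = 1 := by rw [hl]; field_simp
  have hx_eq : l • w + (1 - l) • a = x := by
    rw [hwdef]
    have : l • (a + t • (x - a)) + (1 - l) • a = (l * t) • (x - a) + a := by module
    rw [this, hlt]
    module
  -- the key decomposition of points of `ball x ρ`
  have hkey : ∀ y ∈ ball x ρ, ∃ u ∈ ball a r, y = (1 - l) • u + l • w := by
    intro y hy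
    rw [mem_ball, dist_eq_norm] at hy
    refine ⟨(1 - l)⁻¹ • (y - l • w), ?_, ?_⟩
    · rw [mem_ball, dist_eq_norm]
      have h2 : (1 - l) • ((1 - l)⁻¹ • (y - l • w) - a) = y - x := by
        rw [smul_sub, smul_inv_smul₀ h1l.ne', ← hx_eq]
        module
      have h3 : ‖(1 - l) • ((1 - l)⁻¹ • (y - l • w) - a)‖
          = (1 - l) * ‖(1 - l)⁻¹ • (y - l • w) - a‖ := by
        rw [norm_smul, Real.norm_eq_abs, abs_of_pos h1l]
      rw [h2] at h3
      have := hy.trans_eq hρdef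
      rw [h3] at this
      exact lt_of_mul_lt_mul_left this (le_of_lt h1l)
    · rw [smul_inv_smul₀ h1l.ne']
      abel
  have hsub : ball x ρ ⊆ U := by
    intro y hy
    obtain ⟨u, hu, hyeq⟩ := hkey y hy
    rw [hyeq]
    exact hUconv (hball hu) hwU (le_of_lt h1l) (le_of_lt hl0) (by ring)
  -- lower bound
  set m : ℝ := (1 - l) * M - l * ‖F w‖ with hm
  have hlow : ∀ y ∈ ball x ρ, (F y - m • (1 : E →L[ℂ] E)).IsPositive := by
    intro y hy
    obtain ⟨u, hu, hyeq⟩ := hkey y hy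
    have hP := hconc u (hball hu) w hwU l (le_of_lt hl0) (le_of_lt hl1)
    rw [← hyeq] at hP
    have hQ := hbelow u hu
    have hR := neg_norm_le' (hsa w hwU)
    have hid : F y - m • (1 : E →L[ℂ] E)
        = (F y - ((1 - l) • F u + l • F w)) + (1 - l) • (F u - M • (1 : E →L[ℂ] E))
          + l • (F w + ‖F w‖ • (1 : E →L[ℂ] E)) := by
      rw [hm]; module
    rw [hid]
    exact (hP.add (pos_smul' (le_of_lt h1l) hQ)).add (pos_smul' (le_of_lt hl0) hR)
  -- upper bound via reflection about x
  refine ⟨ρ, hρ, hsub, m, 2 * ‖F x‖ - m, fun y hy => ⟨hlow y hy, ?_⟩⟩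
  set y' : V := x + (x - y) with hy'def
  have hy' : y' ∈ ball x ρ := by
    rw [mem_ball, dist_eq_norm] at *
    have : y' - x = -(y - x) := by rw [hy'def]; abel
    rw [this, norm_neg]
    exact hy
  have hP := hconc y (hsub hy) y' (hsub hy') (1/2) (by norm_num) (by norm_num)
  have harg : (1 - (1/2 : ℝ)) • y + (1/2 : ℝ) • y' = x := by
    rw [hy'def]; module
  rw [harg] at hP
  have hQ := hlow y' hy'
  have hR := le_norm_one' (hsa x hx)
  have hid : (2 * ‖F x‖ - m) • (1 : E →L[ℂ] E) - F y
      = (2:ℝ) • (F x - ((1 - (1/2 : ℝ)) • F y + (1/2 : ℝ) • F y'))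
        + (F y' - m • (1 : E →L[ℂ] E))
        + (2:ℝ) • (‖F x‖ • (1 : E →L[ℂ] E) - F x) := by
    module
  rw [hid]
  exact ((pos_smul' (by norm_num) hP).add hQ).add (pos_smul' (by norm_num) hR)
end

section
/- An operator concave function F from an open convex subset of the k-fold product of bounded self-adjoint operators into the self-adjoint operators, which is locally bounded from below, is locally Lipschitz continuous in the operator norm; in particular it is norm continuous. -/
set_option synthInstance.maxHeartbeats 1000000
set_option maxHeartbeats 4000000

open Metric

section Helpers

open ContinuousLinearMap

variable {E : Type*} [NormedAddCommGroup E] [InnerProductSpace ℂ E] [CompleteSpace E]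

private lemma aux_isPositive_smul {T : E →L[ℂ] E} (h : T.IsPositive) {l : ℝ} (hl : 0 ≤ l) :
    (l • T).IsPositive := by
  rw [RCLike.real_smul_eq_coe_smul (K := ℂ)]
  exact h.smul_of_nonneg (RCLike.ofReal_nonneg.mpr hl)

private lemma aux_smul_le_smul {S T : E →L[ℂ] E} (h : S ≤ T) {l : ℝ} (hl : 0 ≤ l) :
    l • S ≤ l • T := by
  rw [ContinuousLinearMap.le_def] at h ⊢
  rw [← smul_sub]
  exact aux_isPositive_smul h hl

private lemma aux_algebraMap_mono {r s : ℝ} (h : r ≤ s) :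
    algebraMap ℝ (E →L[ℂ] E) r ≤ algebraMap ℝ (E →L[ℂ] E) s := by
  rw [ContinuousLinearMap.le_def, ← map_sub, Algebra.algebraMap_eq_smul_one]
  simpa using aux_isPositive_smul isPositive_one (by linarith)

private lemma aux_norm_le_sandwich {T : E →L[ℂ] E} (hT : IsSelfAdjoint T) {c : ℝ} (hc : 0 ≤ c)
    (h1 : T ≤ algebraMap ℝ (E →L[ℂ] E) c) (h2 : algebraMap ℝ (E →L[ℂ] E) (-c) ≤ T) :
    ‖T‖ ≤ c := by
  obtain hE | hE := subsingleton_or_nontrivial (E →L[ℂ] E)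
  · simpa [Subsingleton.elim T 0] using hc
  · rcases CStarAlgebra.norm_or_neg_norm_mem_spectrum (a := T) hT with h | h
    · exact (le_algebraMap_iff_spectrum_le hT).mp h1 _ h
    · have := (algebraMap_le_iff_le_spectrum hT).mp h2 _ h
      linarith

end Helpers

/-- An operator concave function from an open convex subset of `S(E)^k` into the
self-adjoint operators which is locally bounded from below is locally Lipschitz in the
operator norm; in particular it is norm continuous on its domain. -/
theorem operator_concave_locally_lipschitz
    {E : Type*} [NormedAddCommGroup E] [InnerProductSpace ℂ E] [CompleteSpace E]
    (k : ℕ) (U : Set (Fin k → (E →L[ℂ] E))) (hUopen : IsOpen U) (hUconv : Convex ℝ U)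
    (F : (Fin k → (E →L[ℂ] E)) → (E →L[ℂ] E))
    (hsa : ∀ X ∈ U, IsSelfAdjoint (F X))
    (hconc : ∀ A ∈ U, ∀ B ∈ U, ∀ l : ℝ, 0 ≤ l → l ≤ 1 →
      (F ((1 - l) • A + l • B) - ((1 - l) • F A + l • F B)).IsPositive)
    (hbelow : ∀ X ∈ U, ∃ ρ > 0, ball X ρ ⊆ U ∧ ∃ M : ℝ, ∀ Y ∈ ball X ρ,
      (F Y - M • (1 : E →L[ℂ] E)).IsPositive) :
    (∀ X ∈ U, ∃ r > 0, ∃ C : ℝ, 0 ≤ C ∧ ball X r ⊆ U ∧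
      ∀ Y ∈ ball X r, ∀ Z ∈ ball X r, ‖F Y - F Z‖ ≤ C * ‖Y - Z‖) ∧
    ContinuousOn F U := by
  have key : ∀ X ∈ U, ∃ r > 0, ∃ C : ℝ, 0 ≤ C ∧ ball X r ⊆ U ∧
      ∀ Y ∈ ball X r, ∀ Z ∈ ball X r, ‖F Y - F Z‖ ≤ C * ‖Y - Z‖ := by
    intro X hX
    obtain ⟨ρ, hρ, hballU, M, hM⟩ := hbelow X hX
    have hlow : ∀ Y ∈ ball X ρ, algebraMap ℝ (E →L[ℂ] E) M ≤ F Y := by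
      intro Y hY
      rw [ContinuousLinearMap.le_def, Algebra.algebraMap_eq_smul_one]
      exact hM Y hY
    set m : ℝ := 2 * ‖F X‖ - M with hm
    -- upper bound on the half ball
    have hup : ∀ Y ∈ ball X (ρ / 2), F Y ≤ algebraMap ℝ (E →L[ℂ] E) m := by
      intro Y hY
      rw [mem_ball, dist_eq_norm] at hY
      set Y' : Fin k → (E →L[ℂ] E) := X - (Y - X) with hY'def
      have hY'mem : Y' ∈ ball X ρ := by
        rw [mem_ball, dist_eq_norm, hY'def, show X - (Y - X) - X = -(Y - X) by abel, norm_neg]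
        linarith
      have hYmem : Y ∈ ball X ρ := by
        rw [mem_ball, dist_eq_norm]; linarith
      have h1 := hconc Y (hballU hYmem) Y' (hballU hY'mem) (1/2) (by norm_num) (by norm_num)
      have hcomb : (1 - (1/2:ℝ)) • Y + (1/2:ℝ) • Y' = X := by rw [hY'def]; module
      rw [hcomb] at h1
      have h1' : (1 - (1/2:ℝ)) • F Y + (1/2:ℝ) • F Y' ≤ F X :=
        (ContinuousLinearMap.le_def _ _).mpr h1
      have h2 := aux_smul_le_smul h1' (l := 2) (by norm_num)
      rw [show (2:ℝ) • ((1 - (1/2:ℝ)) • F Y + (1/2:ℝ) • F Y') = F Y + F Y' by module] at h2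
      have hFX : F X ≤ algebraMap ℝ (E →L[ℂ] E) ‖F X‖ :=
        IsSelfAdjoint.le_algebraMap_norm_self (hsa X hX)
      have h3 : (2:ℝ) • F X ≤ algebraMap ℝ (E →L[ℂ] E) (2 * ‖F X‖) := by
        calc (2:ℝ) • F X ≤ (2:ℝ) • algebraMap ℝ (E →L[ℂ] E) ‖F X‖ :=
              aux_smul_le_smul hFX (by norm_num)
          _ = algebraMap ℝ (E →L[ℂ] E) (2 * ‖F X‖) := by
              rw [Algebra.algebraMap_eq_smul_one, Algebra.algebraMap_eq_smul_one, smul_smul]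
      have h4 : F Y + F Y' ≤ algebraMap ℝ (E →L[ℂ] E) (2 * ‖F X‖) := le_trans h2 h3
      calc F Y = (F Y + F Y') - F Y' := by abel
        _ ≤ algebraMap ℝ (E →L[ℂ] E) (2 * ‖F X‖) - algebraMap ℝ (E →L[ℂ] E) M :=
            sub_le_sub h4 (hlow Y' hY'mem)
        _ = algebraMap ℝ (E →L[ℂ] E) m := by rw [← map_sub]
    -- the Lipschitz constant
    set D : ℝ := max (m - M) 0 with hD
    set C : ℝ := D / (ρ / 4) with hC
    have hD0 : 0 ≤ D := le_max_right _ _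
    have hC0 : 0 ≤ C := div_nonneg hD0 (by linarith)
    -- one-sided estimate
    have main : ∀ Y ∈ ball X (ρ / 4), ∀ Z ∈ ball X (ρ / 4), Y ≠ Z →
        F Y - F Z ≤ algebraMap ℝ (E →L[ℂ] E) (C * ‖Y - Z‖) := by
      intro Y hY Z hZ hne
      rw [mem_ball, dist_eq_norm] at hY hZ
      set s : ℝ := ρ / 4 with hs
      have hs0 : 0 < s := by rw [hs]; linarith
      set t : ℝ := ‖Z - Y‖ with ht
      have ht0 : 0 < t := by
        rw [ht, norm_pos_iff]
        exact sub_ne_zero.mpr (Ne.symm hne)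
      set W : Fin k → (E →L[ℂ] E) := Z + (s / t) • (Z - Y) with hW
      have hWmem : W ∈ ball X (ρ / 2) := by
        rw [mem_ball, dist_eq_norm]
        have hWX : W - X = (Z - X) + (s / t) • (Z - Y) := by rw [hW]; abel
        calc ‖W - X‖ ≤ ‖Z - X‖ + ‖(s / t) • (Z - Y)‖ := by
              rw [hWX]; exact norm_add_le _ _
          _ = ‖Z - X‖ + s := by
              rw [norm_smul, Real.norm_eq_abs, abs_of_nonneg (by positivity), ← ht,
                div_mul_cancel₀ _ (ne_of_gt ht0)]
          _ < ρ / 2 := by linarith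
      have hWρ : W ∈ ball X ρ := ball_subset_ball (by linarith) hWmem
      have hYhalf : Y ∈ ball X (ρ / 2) := by rw [mem_ball, dist_eq_norm]; linarith
      have hYρ : Y ∈ ball X ρ := ball_subset_ball (by linarith) hYhalf
      set l : ℝ := t / (s + t) with hl
      have hst : 0 < s + t := by linarith
      have hl0 : 0 ≤ l := div_nonneg (le_of_lt ht0) (le_of_lt hst)
      have hl1 : l ≤ 1 := by
        rw [hl, div_le_one hst]; linarith
      have hcomb : (1 - l) • Y + l • W = Z := by
        rw [hW, hl]
        match_scalars <;> (field_simp; ring)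
      have hcc := hconc Y (hballU hYρ) W (hballU hWρ) l hl0 hl1
      rw [hcomb] at hcc
      have hcc' : (1 - l) • F Y + l • F W ≤ F Z := (ContinuousLinearMap.le_def _ _).mpr hcc
      have step1 : F Y - F Z ≤ l • (F Y - F W) := by
        calc F Y - F Z ≤ F Y - ((1 - l) • F Y + l • F W) := sub_le_sub (le_refl (F Y)) hcc'
          _ = l • (F Y - F W) := by module
      have hFYW : F Y - F W ≤ algebraMap ℝ (E →L[ℂ] E) (m - M) := by
        calc F Y - F W ≤ algebraMap ℝ (E →L[ℂ] E) m - algebraMap ℝ (E →L[ℂ] E) M :=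
              sub_le_sub (hup Y hYhalf) (hlow W hWρ)
          _ = algebraMap ℝ (E →L[ℂ] E) (m - M) := by rw [← map_sub]
      have hreal : l * (m - M) ≤ C * ‖Y - Z‖ := by
        rw [show ‖Y - Z‖ = t by rw [ht, norm_sub_rev]]
        have hDm : m - M ≤ D := le_max_left _ _
        have h1 : l ≤ t / s := by
          rw [hl]
          exact div_le_div_of_nonneg_left (le_of_lt ht0) hs0 (by linarith)
        calc l * (m - M) ≤ l * D := mul_le_mul_of_nonneg_left hDm hl0
          _ ≤ (t / s) * D := mul_le_mul_of_nonneg_right h1 hD0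
          _ = C * t := by rw [hC]; ring
      calc F Y - F Z ≤ l • (F Y - F W) := step1
        _ ≤ l • algebraMap ℝ (E →L[ℂ] E) (m - M) := aux_smul_le_smul hFYW hl0
        _ = algebraMap ℝ (E →L[ℂ] E) (l * (m - M)) := by
            rw [Algebra.algebraMap_eq_smul_one, Algebra.algebraMap_eq_smul_one, smul_smul]
        _ ≤ algebraMap ℝ (E →L[ℂ] E) (C * ‖Y - Z‖) := aux_algebraMap_mono hreal
    refine ⟨ρ / 4, by linarith, C, hC0, ?_, ?_⟩
    · exact (ball_subset_ball (by linarith)).trans hballU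
    · intro Y hY Z hZ
      by_cases hne : Y = Z
      · subst hne; simp
      · have hYU : Y ∈ U := hballU (ball_subset_ball (by linarith) hY)
        have hZU : Z ∈ U := hballU (ball_subset_ball (by linarith) hZ)
        refine aux_norm_le_sandwich ((hsa Y hYU).sub (hsa Z hZU))
          (mul_nonneg hC0 (norm_nonneg _)) (main Y hY Z hZ hne) ?_
        have h2 := main Z hZ Y hY (Ne.symm hne)
        rw [norm_sub_rev] at h2
        have h3 := neg_le_neg h2
        rw [neg_sub] at h3
        rw [map_neg]
        exact h3
  refine ⟨key, ?_⟩
  intro X hX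
  obtain ⟨r, hr, C, hC0, hU, hlip⟩ := key X hX
  have lip : LipschitzOnWith (Real.toNNReal C) F (ball X r) := by
    apply LipschitzOnWith.of_dist_le_mul
    intro y hy z hz
    rw [dist_eq_norm, dist_eq_norm, Real.coe_toNNReal C hC0]
    exact hlip y hy z hz
  exact ((lip.continuousOn.continuousAt (isOpen_ball.mem_nhds (mem_ball_self hr)))).continuousWithinAt
end

section
/- Let F : P_{2n}^k → S_{2n} be a 2n-monotone free function (respecting unitary conjugation and direct sums, and monotone with respect to the componentwise positive semidefinite order on 2n-by-2n matrices). Then the restriction of F to tuples of positive definite n-by-n matrices is n-concave: F(λA + (1-λ)B) ≥ λF(A) + (1-λ)F(B) for all A, B ∈ P_n^k and λ ∈ [0,1]. -/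
open Matrix
open scoped ComplexOrder
set_option linter.unusedSectionVars false
set_option maxHeartbeats 1000000
variable {m : Type*} [Fintype m] [DecidableEq m]

/-- smul of PSD by nonneg real -/

lemma myPD.smul {M : Matrix m m ℂ} (hM : M.PosDef) {c : ℝ} (hc : 0 < c) :
    (((c : ℝ) : ℂ) • M).PosDef := by
  rw [Matrix.posDef_iff_dotProduct_mulVec]
  constructor
  · unfold Matrix.IsHermitian
    rw [conjTranspose_smul, hM.1.eq]
    congr 1
    simp
  · intro x hx
    rw [smul_mulVec, dotProduct_smul, smul_eq_mul]
    exact mul_pos (by exact_mod_cast hc) (hM.dotProduct_mulVec_pos hx)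

variable {m : Type*} [Fintype m] [DecidableEq m]

lemma sum_elim_dot {p q : Type*} [Fintype p] [Fintype q]
    (x u : p → ℂ) (y v : q → ℂ) :
    Sum.elim x y ⬝ᵥ Sum.elim u v = x ⬝ᵥ u + y ⬝ᵥ v := by
  simp [dotProduct, Fintype.sum_sum_type]

lemma star_sum_elim {p q : Type*} (x : p → ℂ) (y : q → ℂ) :
    star (Sum.elim x y) = Sum.elim (star x) (star y) := by
  funext i; cases i <;> rfl

lemma fromBlocks_posSemidef {p q : Type*} [Fintype p] [Fintype q] [DecidableEq p] [DecidableEq q]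
    {A : Matrix p p ℂ} {D : Matrix q q ℂ} (hA : A.PosSemidef) (hD : D.PosSemidef) :
    (fromBlocks A 0 0 D).PosSemidef := by
  rw [Matrix.posSemidef_iff_dotProduct_mulVec]
  constructor
  · unfold Matrix.IsHermitian
    rw [fromBlocks_conjTranspose, hA.1.eq, hD.1.eq]
    simp
  · intro x
    have hx : x = Sum.elim (x ∘ Sum.inl) (x ∘ Sum.inr) := by
      funext i; cases i <;> rfl
    rw [hx, fromBlocks_mulVec, star_sum_elim, sum_elim_dot]
    simp only [Matrix.zero_mulVec, add_zero, zero_add]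
    exact add_nonneg (hA.dotProduct_mulVec_nonneg _) (hD.dotProduct_mulVec_nonneg _)

lemma fromBlocks_posDef {p q : Type*} [Fintype p] [Fintype q] [DecidableEq p] [DecidableEq q]
    {A : Matrix p p ℂ} {D : Matrix q q ℂ} (hA : A.PosDef) (hD : D.PosDef) :
    (fromBlocks A 0 0 D).PosDef := by
  rw [Matrix.posDef_iff_dotProduct_mulVec]
  constructor
  · unfold Matrix.IsHermitian
    rw [fromBlocks_conjTranspose, hA.1.eq, hD.1.eq]
    simp
  · intro x hx
    have hxe : x = Sum.elim (x ∘ Sum.inl) (x ∘ Sum.inr) := by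
      funext i; cases i <;> rfl
    rw [hxe, fromBlocks_mulVec, star_sum_elim, sum_elim_dot]
    simp only [Matrix.zero_mulVec, add_zero, zero_add]
    rcases (em (x ∘ Sum.inl = 0)) with h1 | h1
    · have h2 : x ∘ Sum.inr ≠ 0 := by
        intro h2
        apply hx
        funext i
        cases i with
        | inl i => exact congrFun h1 i
        | inr i => exact congrFun h2 i
      have := hD.dotProduct_mulVec_pos h2
      have h0 := hA.posSemidef.dotProduct_mulVec_nonneg (x ∘ Sum.inl)
      exact add_pos_of_nonneg_of_pos h0 this
    · exact add_pos_of_pos_of_nonneg (hA.dotProduct_mulVec_pos h1) (hD.posSemidef.dotProduct_mulVec_nonneg _)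

/-- positive definiteness is preserved by unitary conjugation -/
lemma posDef_unitary_conj {U M : Matrix m m ℂ} (hU : U ∈ Matrix.unitaryGroup m ℂ)
    (hM : M.PosDef) : (star U * M * U).PosDef := by
  have hsu : star U * U = 1 := (Matrix.mem_unitaryGroup_iff').mp hU
  rw [Matrix.posDef_iff_dotProduct_mulVec]
  constructor
  · unfold Matrix.IsHermitian
    simp only [conjTranspose_mul, star_eq_conjTranspose, conjTranspose_conjTranspose, hM.1.eq,
      Matrix.mul_assoc]
  · intro x hx
    have key : star x ⬝ᵥ (star U * M * U) *ᵥ x = star (U *ᵥ x) ⬝ᵥ M *ᵥ (U *ᵥ x) := by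
      rw [Matrix.mul_assoc, ← mulVec_mulVec, dotProduct_mulVec,
        star_eq_conjTranspose U, ← star_mulVec, ← mulVec_mulVec]
    rw [key]
    apply hM.dotProduct_mulVec_pos
    intro h0
    apply hx
    have : star U *ᵥ (U *ᵥ x) = star U *ᵥ 0 := by rw [h0]
    rwa [mulVec_mulVec, hsu, one_mulVec, mulVec_zero] at this

variable {m : Type*} [Fintype m] [DecidableEq m]

lemma myPSD.smul {M : Matrix m m ℂ} (hM : M.PosSemidef) {c : ℝ} (hc : 0 ≤ c) :
    (((c : ℝ) : ℂ) • M).PosSemidef := by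
  rw [Matrix.posSemidef_iff_dotProduct_mulVec]
  constructor
  · unfold Matrix.IsHermitian
    rw [conjTranspose_smul, hM.1.eq]
    congr 1
    simp
  · intro x
    rw [smul_mulVec, dotProduct_smul, smul_eq_mul]
    exact mul_nonneg (by exact_mod_cast hc) (hM.dotProduct_mulVec_nonneg x)

lemma diag_smul_one_sub (c : ℝ) (d : m → ℝ) :
    ((c : ℂ) • 1 - diagonal (RCLike.ofReal ∘ d) : Matrix m m ℂ)
      = diagonal (fun i => (c : ℂ) - (d i : ℂ)) := by
  ext i j
  rcases eq_or_ne i j with h | h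
  · subst h; simp [Matrix.one_apply, Matrix.diagonal_apply]
  · simp [Matrix.one_apply, Matrix.diagonal_apply, h]

lemma psd_diag_nonneg (d : m → ℂ) (h : ∀ i, 0 ≤ d i) : (diagonal d).PosSemidef := by
  apply Matrix.PosSemidef.diagonal
  rw [Pi.le_def]
  intro i
  simpa using h i

lemma herm_conj_diag_shift {M : Matrix m m ℂ} (hH : M.IsHermitian) (c : ℝ)
    (h : ∀ i, 0 ≤ c - hH.eigenvalues i) : ((c : ℂ) • 1 - M).PosSemidef := by
  set U : Matrix m m ℂ := (Matrix.IsHermitian.eigenvectorUnitary hH : Matrix m m ℂ) with hUdef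
  have hUU : U * star U = 1 := (Matrix.mem_unitaryGroup_iff).mp (Matrix.IsHermitian.eigenvectorUnitary hH).2
  have key : (c : ℂ) • 1 - M
      = U * ((c : ℂ) • 1 - diagonal (RCLike.ofReal ∘ hH.eigenvalues)) * star U := by
    rw [Matrix.mul_sub, Matrix.sub_mul]
    rw [Matrix.mul_smul, Matrix.mul_one, Matrix.smul_mul, hUU]
    have hs := hH.spectral_theorem
    rw [Unitary.conjStarAlgAut_apply] at hs
    conv_lhs => rw [hs]
  rw [key]
  apply Matrix.PosSemidef.mul_mul_conjTranspose_same
  rw [diag_smul_one_sub]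
  apply psd_diag_nonneg
  intro i
  rw [← Complex.ofReal_sub]
  exact_mod_cast h i

lemma herm_conj_diag_shift' {M : Matrix m m ℂ} (hH : M.IsHermitian) (c : ℝ)
    (h : ∀ i, 0 ≤ hH.eigenvalues i - c) : (M - (c : ℂ) • 1).PosSemidef := by
  set U : Matrix m m ℂ := (Matrix.IsHermitian.eigenvectorUnitary hH : Matrix m m ℂ) with hUdef
  have hUU : U * star U = 1 := (Matrix.mem_unitaryGroup_iff).mp (Matrix.IsHermitian.eigenvectorUnitary hH).2
  have key : M - (c : ℂ) • 1
      = U * (diagonal (RCLike.ofReal ∘ hH.eigenvalues) - (c : ℂ) • 1) * star U := by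
    rw [Matrix.mul_sub, Matrix.sub_mul]
    rw [Matrix.mul_smul, Matrix.mul_one, Matrix.smul_mul, hUU]
    have hs := hH.spectral_theorem
    rw [Unitary.conjStarAlgAut_apply] at hs
    conv_lhs => rw [hs]
  rw [key]
  apply Matrix.PosSemidef.mul_mul_conjTranspose_same
  have : (diagonal (RCLike.ofReal ∘ hH.eigenvalues) - (c : ℂ) • 1 : Matrix m m ℂ)
      = diagonal (fun i => (hH.eigenvalues i : ℂ) - (c : ℂ)) := by
    have := diag_smul_one_sub c hH.eigenvalues (m := m)
    rw [← neg_sub, this]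
    ext i j
    rcases eq_or_ne i j with hij | hij
    · subst hij; simp [Matrix.diagonal_apply]
    · simp [Matrix.diagonal_apply, hij]
  rw [this]
  apply psd_diag_nonneg
  intro i
  rw [← Complex.ofReal_sub]
  exact_mod_cast h i

lemma psd_le_smul_one {M : Matrix m m ℂ} (hM : M.PosSemidef) :
    ∃ K : ℝ, 0 < K ∧ ((K : ℂ) • 1 - M).PosSemidef := by
  refine ⟨1 + ∑ i, |hM.1.eigenvalues i|, by positivity, herm_conj_diag_shift hM.1 _ ?_⟩
  intro i
  have h1 : hM.1.eigenvalues i ≤ |hM.1.eigenvalues i| := le_abs_self _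
  have h2 : |hM.1.eigenvalues i| ≤ ∑ j, |hM.1.eigenvalues j| :=
    Finset.single_le_sum (f := fun j => |hM.1.eigenvalues j|)
      (fun j _ => abs_nonneg _) (Finset.mem_univ i)
  linarith

lemma trivial_psd [IsEmpty m] (M : Matrix m m ℂ) : M.PosSemidef := by
  rw [Matrix.posSemidef_iff_dotProduct_mulVec]
  constructor
  · ext i j; exact absurd (Fintype.card_pos_iff.mpr ⟨i⟩) (by simp)
  · intro x
    simp [dotProduct]

lemma posDef_smul_one_le {M : Matrix m m ℂ} (hM : M.PosDef) :
    ∃ c : ℝ, 0 < c ∧ (M - (c : ℂ) • 1).PosSemidef := by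
  cases isEmpty_or_nonempty m with
  | inl h => exact ⟨1, one_pos, trivial_psd _⟩
  | inr h =>
    refine ⟨Finset.univ.inf' Finset.univ_nonempty hM.1.eigenvalues, ?_, ?_⟩
    · obtain ⟨i, _, hi⟩ := Finset.exists_mem_eq_inf' Finset.univ_nonempty hM.1.eigenvalues
      rw [hi]
      exact hM.eigenvalues_pos i
    · apply herm_conj_diag_shift' hM.1
      intro i
      have := Finset.inf'_le hM.1.eigenvalues (Finset.mem_univ i)
      linarith

/-- domination lemma -/
lemma exists_smul_posDef_dom {C S : Matrix m m ℂ} (hC : C.PosDef) (hS : S.PosSemidef) :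
    ∃ K : ℝ, 0 < K ∧ (∀ K' : ℝ, K ≤ K' → ((K' : ℂ) • C - S).PosSemidef) := by
  obtain ⟨K1, hK1, hle⟩ := psd_le_smul_one hS
  obtain ⟨c, hc, hge⟩ := posDef_smul_one_le hC
  refine ⟨K1 / c, by positivity, ?_⟩
  intro K' hK'
  have hK'pos : 0 < K' := lt_of_lt_of_le (by positivity) hK'
  have key : (K' : ℂ) • C - S
      = ((K' : ℝ) : ℂ) • (C - (c : ℂ) • 1) + (((K1 : ℝ) : ℂ) • 1 - S)
        + (((K' * c - K1 : ℝ) : ℂ) • 1) := by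
    push_cast
    module
  rw [key]
  have h1 := myPSD.smul hge hK'pos.le
  have h3 : (((K' * c - K1 : ℝ) : ℂ) • (1 : Matrix m m ℂ)).PosSemidef := by
    apply myPSD.smul Matrix.PosSemidef.one
    rw [div_le_iff₀ hc] at hK'
    linarith
  exact (h1.add hle).add h3

variable {m : Type*} [Fintype m] [DecidableEq m]

lemma herm_real_smul {L : Matrix m m ℂ} (c : ℝ) (h : L.IsHermitian) :
    (((c : ℝ) : ℂ) • L).IsHermitian := by
  unfold Matrix.IsHermitian
  rw [conjTranspose_smul, h.eq]
  congr 1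
  simp

lemma herm_of_real_smul {L : Matrix m m ℂ} {c : ℝ} (hc : c ≠ 0)
    (h : (((c : ℝ) : ℂ) • L).IsHermitian) : L.IsHermitian := by
  have h2 := herm_real_smul (c⁻¹) h
  rw [smul_smul, ← Complex.ofReal_mul, inv_mul_cancel₀ hc] at h2
  simpa using h2

lemma psd_of_forall_eps {M L : Matrix m m ℂ} (ε₀ : ℝ) (hε₀ : 0 < ε₀)
    (h : ∀ ε : ℝ, 0 < ε → ε ≤ ε₀ → (M + ((ε : ℝ) : ℂ) • L).PosSemidef) : M.PosSemidef := by
  have h1 := h ε₀ hε₀ le_rfl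
  have h2 := h (ε₀ / 2) (by linarith) (by linarith)
  have hLh : L.IsHermitian := by
    apply herm_of_real_smul (c := ε₀ / 2) (by positivity)
    have hL : ((ε₀ / 2 : ℝ) : ℂ) • L = (M + (ε₀ : ℂ) • L) - (M + ((ε₀ / 2 : ℝ) : ℂ) • L) := by
      push_cast
      module
    rw [hL]
    exact h1.1.sub h2.1
  rw [Matrix.posSemidef_iff_dotProduct_mulVec]
  constructor
  · have : M = (M + ((ε₀ : ℝ) : ℂ) • L) - ((ε₀ : ℝ) : ℂ) • L := by module
    rw [this]
    exact h1.1.sub (herm_real_smul ε₀ hLh)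
  · rw [Matrix.posSemidef_iff_dotProduct_mulVec] at h1
    intro x
    set a := star x ⬝ᵥ M *ᵥ x with ha
    set b := star x ⬝ᵥ L *ᵥ x with hb
    have hab : ∀ ε : ℝ, 0 < ε → ε ≤ ε₀ → 0 ≤ a + (ε : ℂ) * b := by
      intro ε p1 p2
      have := (h ε p1 p2).dotProduct_mulVec_nonneg x
      rw [add_mulVec, smul_mulVec, dotProduct_add, dotProduct_smul, smul_eq_mul] at this
      exact this
    have him : ∀ ε : ℝ, 0 < ε → ε ≤ ε₀ → a.im + ε * b.im = 0 := by
      intro ε p1 p2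
      have := (Complex.le_def.mp (hab ε p1 p2)).2
      simp only [Complex.add_im, Complex.mul_im, Complex.ofReal_re, Complex.ofReal_im,
        Complex.zero_im, zero_mul, add_zero] at this
      linarith
    have hre : ∀ ε : ℝ, 0 < ε → ε ≤ ε₀ → 0 ≤ a.re + ε * b.re := by
      intro ε p1 p2
      have := (Complex.le_def.mp (hab ε p1 p2)).1
      simp only [Complex.add_re, Complex.mul_re, Complex.ofReal_re, Complex.ofReal_im,
        Complex.zero_re, zero_mul, sub_zero] at this
      linarith
    have him1 := him ε₀ hε₀ le_rfl
    have him2 := him (ε₀ / 2) (by linarith) (by linarith)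
    have hbim : b.im = 0 := by
      have : ε₀ / 2 * b.im = 0 := by linarith
      rcases mul_eq_zero.mp this with h' | h'
      · linarith
      · exact h'
    have haim : a.im = 0 := by
      have := him1
      rw [hbim] at this
      linarith
    have hare : 0 ≤ a.re := by
      by_contra hneg
      push_neg at hneg
      rcases le_or_gt b.re 0 with hbr | hbr
      · have := hre ε₀ hε₀ le_rfl
        nlinarith
      · have hc1 : 0 < min ε₀ (-a.re / (2 * b.re)) := by
          apply lt_min hε₀
          apply div_pos (by linarith) (by linarith)
        have := hre _ hc1 (min_le_left _ _)
        have h3 : min ε₀ (-a.re / (2 * b.re)) * b.re ≤ (-a.re / (2 * b.re)) * b.re :=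
          mul_le_mul_of_nonneg_right (min_le_right _ _) hbr.le
        have h4 : (-a.re / (2 * b.re)) * b.re = -a.re / 2 := by field_simp
        nlinarith
    rw [Complex.le_def]
    constructor
    · simpa using hare
    · simpa using haim.symm

variable {p : Type*} [Fintype p] [DecidableEq p]

def rotM (p : Type*) [Fintype p] [DecidableEq p] (a b : ℝ) : Matrix (p ⊕ p) (p ⊕ p) ℂ :=
  fromBlocks (((a : ℝ) : ℂ) • 1) (-(((b : ℝ) : ℂ) • 1)) (((b : ℝ) : ℂ) • 1) (((a : ℝ) : ℂ) • 1)

lemma rotM_star (a b : ℝ) : star (rotM p a b)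
    = fromBlocks (((a : ℝ) : ℂ) • 1) (((b : ℝ) : ℂ) • 1) (-(((b : ℝ) : ℂ) • 1)) (((a : ℝ) : ℂ) • 1) := by
  rw [star_eq_conjTranspose, rotM, fromBlocks_conjTranspose]
  refine Matrix.fromBlocks_inj.mpr ⟨?_, ?_, ?_, ?_⟩ <;>
    simp [conjTranspose_smul, Complex.star_def, Complex.conj_ofReal]

lemma rotM_mem (a b : ℝ) (h : a ^ 2 + b ^ 2 = 1) : rotM p a b ∈ Matrix.unitaryGroup (p ⊕ p) ℂ := by
  have hc : ((a : ℂ)) ^ 2 + ((b : ℂ)) ^ 2 = 1 := by exact_mod_cast congrArg (fun x : ℝ => (x : ℂ)) h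
  rw [Matrix.mem_unitaryGroup_iff']
  rw [rotM_star, rotM, fromBlocks_multiply]
  rw [show (1 : Matrix (p ⊕ p) (p ⊕ p) ℂ) = fromBlocks 1 0 0 1 from fromBlocks_one.symm]
  refine Matrix.fromBlocks_inj.mpr ⟨?_, ?_, ?_, ?_⟩ <;>
  · simp only [Matrix.smul_mul, Matrix.mul_smul, Matrix.one_mul, Matrix.mul_one, smul_smul,
      Matrix.mul_neg, Matrix.neg_mul, smul_neg, neg_neg, smul_zero, Matrix.mul_zero,
      Matrix.zero_mul, add_zero, zero_add, neg_smul]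
    match_scalars <;> first | ring1 | linear_combination hc | linear_combination -hc

lemma rotM_conj (a b : ℝ) (P Q : Matrix p p ℂ) :
    star (rotM p a b) * fromBlocks P 0 0 Q * rotM p a b
      = fromBlocks (((a ^ 2 : ℝ) : ℂ) • P + ((b ^ 2 : ℝ) : ℂ) • Q)
          (((a * b : ℝ) : ℂ) • (Q - P)) (((a * b : ℝ) : ℂ) • (Q - P))
          (((b ^ 2 : ℝ) : ℂ) • P + ((a ^ 2 : ℝ) : ℂ) • Q) := by
  rw [rotM_star, rotM, fromBlocks_multiply, fromBlocks_multiply]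
  refine Matrix.fromBlocks_inj.mpr ⟨?_, ?_, ?_, ?_⟩ <;>
  · push_cast
    simp only [Matrix.smul_mul, Matrix.mul_smul, Matrix.one_mul, Matrix.mul_one, smul_smul,
      Matrix.mul_neg, Matrix.neg_mul, smul_neg, neg_neg, smul_zero, Matrix.mul_zero,
      Matrix.zero_mul, add_zero, zero_add, neg_smul]
    match_scalars <;> ring

variable {p : Type*} [Fintype p] [DecidableEq p]

lemma fromBlocks_submatrix_inl {q : Type*} (A : Matrix p p ℂ) (B : Matrix p q ℂ)
    (C : Matrix q p ℂ) (D : Matrix q q ℂ) :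
    (fromBlocks A B C D).submatrix Sum.inl Sum.inl = A := by
  ext i j
  simp [Matrix.submatrix_apply, Matrix.fromBlocks]

lemma offdiag_psd (t : ℝ) (ht : 0 < t) {D : Matrix p p ℂ} (hD : D.IsHermitian) :
    (fromBlocks (((t : ℝ) : ℂ) • (D * D)) (-D) (-D) (((t⁻¹ : ℝ) : ℂ) • 1)).PosSemidef := by
  set c : ℝ := Real.sqrt t with hc
  have hcpos : 0 < c := Real.sqrt_pos.mpr ht
  have h1 : (c : ℂ) * (c : ℂ) = (t : ℂ) := by
    rw [← Complex.ofReal_mul, Real.mul_self_sqrt ht.le]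
  have hcne : (c : ℂ) ≠ 0 := by exact_mod_cast hcpos.ne'
  have h2 : (c : ℂ) * ((c : ℂ))⁻¹ = 1 := mul_inv_cancel₀ hcne
  have h3 : ((c : ℂ))⁻¹ * ((c : ℂ))⁻¹ = ((t : ℂ))⁻¹ := by rw [← mul_inv, h1]
  set N : Matrix (p ⊕ p) (p ⊕ p) ℂ :=
    fromBlocks ((c : ℂ) • D) (-(((c⁻¹ : ℝ) : ℂ) • 1)) 0 0 with hN
  have key : fromBlocks (((t : ℝ) : ℂ) • (D * D)) (-D) (-D) (((t⁻¹ : ℝ) : ℂ) • 1) = Nᴴ * N := by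
    rw [hN, fromBlocks_conjTranspose, fromBlocks_multiply]
    refine (Matrix.fromBlocks_inj.mpr ⟨?_, ?_, ?_, ?_⟩).symm <;>
    · simp only [Matrix.conjTranspose_neg, Matrix.conjTranspose_smul, Matrix.conjTranspose_one,
        hD.eq, Matrix.smul_mul, Matrix.mul_smul, Matrix.one_mul, Matrix.mul_one, smul_smul,
        Matrix.mul_neg, Matrix.neg_mul, smul_neg, neg_neg, smul_zero, Matrix.mul_zero,
        Matrix.zero_mul, add_zero, zero_add, neg_smul, Matrix.conjTranspose_zero,
        Complex.star_def, Complex.conj_ofReal, map_inv₀, Complex.ofReal_inv]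
      match_scalars <;>
        first
          | ring1
          | linear_combination h1
          | linear_combination h2
          | linear_combination h3
          | linear_combination -h1
          | linear_combination -h2
          | linear_combination -h3
          | linear_combination h3 - h2
          | linear_combination 2 * h3
          | linear_combination h2 - h3
          | linear_combination 2 * h3 - 2 * h2
          | linear_combination 2 * h2 - 2 * h3
  rw [key]
  exact Matrix.posSemidef_conjTranspose_mul_self N

lemma step2_key {C DD : Matrix p p ℂ} (hC : C.PosDef) (cc σσ t K : ℝ)
    (hcs : cc ^ 2 + σσ ^ 2 = 1) (ht : 0 ≤ t) (hK : 0 < K) (htK : t * K ≤ σσ ^ 2 * σσ ^ 2)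
    (hdom : ((K : ℂ) • C - DD).PosSemidef) :
    (fromBlocks
        (((cc ^ 2 : ℝ) : ℂ) • C + ((σσ ^ 2 : ℝ) : ℂ) • (C + C) - (C + ((t : ℝ) : ℂ) • DD))
        (((cc * σσ : ℝ) : ℂ) • ((C + C) - C))
        (((cc * σσ : ℝ) : ℂ) • ((C + C) - C))
        (((σσ ^ 2 : ℝ) : ℂ) • C + ((cc ^ 2 : ℝ) : ℂ) • (C + C)
          - ((cc ^ 2 : ℝ) : ℂ) • C)).PosSemidef := by
  have hxy : ((cc : ℂ)) ^ 2 + ((σσ : ℂ)) ^ 2 = 1 := by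
    exact_mod_cast congrArg (fun x : ℝ => (x : ℂ)) hcs
  open scoped MatrixOrder in set W : Matrix p p ℂ := CFC.sqrt C with hW
  open scoped MatrixOrder in have hWW : W * W = C := CFC.sqrt_mul_sqrt_self C hC.posSemidef.nonneg
  open scoped MatrixOrder in have hWh : W.IsHermitian := (CFC.sqrt_nonneg C).posSemidef.1
  set N : Matrix (p ⊕ p) (p ⊕ p) ℂ :=
    fromBlocks (((cc * σσ : ℝ) : ℂ) • W) W 0 0 with hN
  have key : fromBlocks
        (((cc ^ 2 : ℝ) : ℂ) • C + ((σσ ^ 2 : ℝ) : ℂ) • (C + C) - (C + ((t : ℝ) : ℂ) • DD))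
        (((cc * σσ : ℝ) : ℂ) • ((C + C) - C))
        (((cc * σσ : ℝ) : ℂ) • ((C + C) - C))
        (((σσ ^ 2 : ℝ) : ℂ) • C + ((cc ^ 2 : ℝ) : ℂ) • (C + C) - ((cc ^ 2 : ℝ) : ℂ) • C)
      = Nᴴ * N + fromBlocks
          ((((σσ ^ 2 * σσ ^ 2 : ℝ) : ℂ)) • C - ((t : ℝ) : ℂ) • DD) 0 0 0 := by
    rw [hN, fromBlocks_conjTranspose, fromBlocks_multiply, fromBlocks_add]
    rw [conjTranspose_smul, hWh.eq, Complex.star_def, Complex.conj_ofReal]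
    refine Matrix.fromBlocks_inj.mpr ⟨?_, ?_, ?_, ?_⟩ <;>
    · simp only [Matrix.smul_mul, Matrix.mul_smul, smul_smul, Matrix.conjTranspose_zero,
        Matrix.mul_zero, Matrix.zero_mul, add_zero, zero_add, hWW]
      push_cast
      match_scalars <;>
        first
          | ring1
          | linear_combination hxy
          | linear_combination (1 - ((σσ : ℝ) : ℂ) ^ 2) * hxy
          | linear_combination C * hxy
  rw [key]
  refine (Matrix.posSemidef_conjTranspose_mul_self N).add ?_
  refine fromBlocks_posSemidef ?_ Matrix.PosSemidef.zero
  have hsplit : (((σσ ^ 2 * σσ ^ 2 : ℝ) : ℂ)) • C - ((t : ℝ) : ℂ) • DD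
      = (((σσ ^ 2 * σσ ^ 2 - t * K : ℝ) : ℂ)) • C + ((t : ℝ) : ℂ) • (((K : ℝ) : ℂ) • C - DD) := by
    push_cast
    module
  rw [hsplit]
  refine (myPSD.smul hC.posSemidef (by linarith)).add (myPSD.smul hdom ht)
lemma fromBlocks_sub' {q : Type*} [Fintype p] [Fintype q]
    (A A' : Matrix p p ℂ) (B B' : Matrix p q ℂ) (C C' : Matrix q p ℂ) (D D' : Matrix q q ℂ) :
    fromBlocks A B C D - fromBlocks A' B' C' D'
      = fromBlocks (A - A') (B - B') (C - C') (D - D') := by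
  ext i j
  cases i <;> cases j <;> simp [Matrix.fromBlocks, Matrix.sub_apply]

/-- A `2n`-monotone free function restricted to tuples of positive definite `n × n`
matrices is `n`-concave. Here `F` is the restriction of the free function to size `n`
and `G` its value on size-`2n` matrices (indexed by `Fin n ⊕ Fin n`); the free-function
properties (unitary invariance and respecting direct sums) and `2n`-monotonicity are
hypotheses. -/
theorem two_n_monotone_implies_n_concave (n k : ℕ)
    (F : (Fin k → Matrix (Fin n) (Fin n) ℂ) → Matrix (Fin n) (Fin n) ℂ)
    (G : (Fin k → Matrix (Fin n ⊕ Fin n) (Fin n ⊕ Fin n) ℂ) →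
      Matrix (Fin n ⊕ Fin n) (Fin n ⊕ Fin n) ℂ)
    -- `G` is invariant under simultaneous unitary conjugation
    (hunit : ∀ (U : Matrix (Fin n ⊕ Fin n) (Fin n ⊕ Fin n) ℂ),
      U ∈ Matrix.unitaryGroup (Fin n ⊕ Fin n) ℂ →
      ∀ A : Fin k → Matrix (Fin n ⊕ Fin n) (Fin n ⊕ Fin n) ℂ, (∀ i, (A i).PosDef) →
        G (fun i => star U * A i * U) = star U * G A * U)
    -- the free function respects direct sums
    (hsum : ∀ (A B : Fin k → Matrix (Fin n) (Fin n) ℂ),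
      (∀ i, (A i).PosDef) → (∀ i, (B i).PosDef) →
      G (fun i => Matrix.fromBlocks (A i) 0 0 (B i)) = Matrix.fromBlocks (F A) 0 0 (F B))
    -- `2n`-monotonicity
    (hmono : ∀ (A B : Fin k → Matrix (Fin n ⊕ Fin n) (Fin n ⊕ Fin n) ℂ),
      (∀ i, (A i).PosDef) → (∀ i, (B i).PosDef) → (∀ i, (B i - A i).PosSemidef) →
      (G B - G A).PosSemidef) :
    -- conclusion: `n`-concavity
    ∀ (A B : Fin k → Matrix (Fin n) (Fin n) ℂ),
      (∀ i, (A i).PosDef) → (∀ i, (B i).PosDef) → ∀ l : ℝ, 0 ≤ l → l ≤ 1 →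
      (F (fun i => (l : ℂ) • A i + ((1 - l : ℝ) : ℂ) • B i) -
        ((l : ℂ) • F A + ((1 - l : ℝ) : ℂ) • F B)).PosSemidef := by
  intro A B hA hB l hl0 hl1
  have hμ0 : (0 : ℝ) ≤ 1 - l := by linarith
  set sl : ℝ := Real.sqrt l with hsl
  set rl : ℝ := Real.sqrt (1 - l) with hrl
  have hsl2 : sl ^ 2 = l := Real.sq_sqrt hl0
  have hrl2 : rl ^ 2 = 1 - l := Real.sq_sqrt hμ0
  -- the convex combination tuple
  set CC : Fin k → Matrix (Fin n) (Fin n) ℂ :=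
    fun i => (l : ℂ) • A i + ((1 - l : ℝ) : ℂ) • B i with hCC
  have hCpd : ∀ i, (CC i).PosDef := by
    intro i
    rcases eq_or_lt_of_le hl0 with h0 | h0
    · rw [hCC]
      simp only [← h0, Complex.ofReal_zero, zero_smul, zero_add, sub_zero, Complex.ofReal_one,
        one_smul]
      exact hB i
    · have h1 : ((l : ℝ) : ℂ) • A i = (l : ℂ) • A i := rfl
      exact Matrix.PosDef.add_posSemidef (myPD.smul (hA i) h0)
        (myPSD.smul (hB i).posSemidef hμ0)
  -- the off-diagonal matrices
  set DD : Fin k → Matrix (Fin n) (Fin n) ℂ :=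
    fun i => ((sl * rl : ℝ) : ℂ) • (B i - A i) with hDD
  have hDh : ∀ i, (DD i).IsHermitian := by
    intro i
    exact herm_real_smul _ ((hB i).1.sub (hA i).1)
  have hDDpsd : ∀ i, (DD i * DD i).PosSemidef := by
    intro i
    have h := Matrix.posSemidef_conjTranspose_mul_self (DD i)
    rwa [(hDh i).eq] at h
  -- global domination constant
  choose Kf hKfpos hKfdom using
    fun i => exists_smul_posDef_dom (hCpd i) (hDDpsd i)
  set K : ℝ := 1 + ∑ i, |Kf i| with hK
  have hKpos : 0 < K := by positivity
  have hdom : ∀ i, ((K : ℂ) • CC i - DD i * DD i).PosSemidef := by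
    intro i
    apply hKfdom i
    have h1 : Kf i ≤ |Kf i| := le_abs_self _
    have h2 : |Kf i| ≤ ∑ j, |Kf j| :=
      Finset.single_le_sum (f := fun j => |Kf j|) (fun j _ => abs_nonneg _) (Finset.mem_univ i)
    rw [hK]; linarith
  -- the other diagonal corner
  set EE : Fin k → Matrix (Fin n) (Fin n) ℂ :=
    fun i => ((1 - l : ℝ) : ℂ) • A i + ((l : ℝ) : ℂ) • B i with hEE
  have hEpsd : ∀ i, (EE i).PosSemidef := by
    intro i
    exact (myPSD.smul (hA i).posSemidef hμ0).add (myPSD.smul (hB i).posSemidef hl0)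
  -- the doubled tuple
  set QQ : Fin k → Matrix (Fin n) (Fin n) ℂ := fun i => CC i + CC i with hQQ
  have hQpd : ∀ i, (QQ i).PosDef := fun i => (hCpd i).add (hCpd i)
  -- the `2n` rotation for step 1
  set U : Matrix (Fin n ⊕ Fin n) (Fin n ⊕ Fin n) ℂ := rotM (Fin n) sl rl with hU
  have hUmem : U ∈ Matrix.unitaryGroup (Fin n ⊕ Fin n) ℂ := by
    apply rotM_mem
    rw [hsl2, hrl2]; ring
  set X : Fin k → Matrix (Fin n ⊕ Fin n) (Fin n ⊕ Fin n) ℂ :=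
    fun i => fromBlocks (A i) 0 0 (B i) with hX
  have hXpd : ∀ i, (X i).PosDef := fun i => fromBlocks_posDef (hA i) (hB i)
  -- the limiting argument
  apply psd_of_forall_eps (L := F QQ - F CC) (1 / 2 : ℝ) (by norm_num)
  intro ε hε1 hε2
  set cc : ℝ := Real.sqrt (1 - ε) with hcc
  set σσ : ℝ := Real.sqrt ε with hσσ
  have hcc2 : cc ^ 2 = 1 - ε := Real.sq_sqrt (by linarith)
  have hσσ2 : σσ ^ 2 = ε := Real.sq_sqrt hε1.le
  have hccpos : 0 < cc := Real.sqrt_pos.mpr (by linarith)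
  have hcs : cc ^ 2 + σσ ^ 2 = 1 := by rw [hcc2, hσσ2]; ring
  set t : ℝ := ε ^ 2 / K with htdef
  have ht : 0 < t := by positivity
  have htK : t * K ≤ σσ ^ 2 * σσ ^ 2 := by
    rw [htdef, hσσ2, div_mul_cancel₀ _ hKpos.ne']
    nlinarith
  -- the perturbed midpoint tuple
  set PP : Fin k → Matrix (Fin n) (Fin n) ℂ :=
    fun i => CC i + ((t : ℝ) : ℂ) • (DD i * DD i) with hPP
  have hPpd : ∀ i, (PP i).PosDef :=
    fun i => (hCpd i).add_posSemidef (myPSD.smul (hDDpsd i) ht.le)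
  set E2 : Fin k → Matrix (Fin n) (Fin n) ℂ :=
    fun i => EE i + ((t⁻¹ : ℝ) : ℂ) • 1 with hE2
  have hE2pd : ∀ i, (E2 i).PosDef :=
    fun i => Matrix.PosDef.posSemidef_add (hEpsd i) (myPD.smul Matrix.PosDef.one (inv_pos.mpr ht))
  -- step 1 : monotonicity against the perturbed block diagonal
  have hTpd : ∀ i, ((fun j => star U * X j * U) i).PosDef :=
    fun i => posDef_unitary_conj hUmem (hXpd i)
  have hRpd : ∀ i, ((fun j => fromBlocks (PP j) 0 0 (E2 j)) i).PosDef :=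
    fun i => fromBlocks_posDef (hPpd i) (hE2pd i)
  have hTeq : ∀ i, star U * X i * U = fromBlocks (CC i) (DD i) (DD i) (EE i) := by
    intro i
    rw [hU, hX, rotM_conj, hsl2, hrl2, hCC, hDD, hEE]
  have hdiff1 : ∀ i, ((fun j => fromBlocks (PP j) 0 0 (E2 j)) i
      - (fun j => star U * X j * U) i).PosSemidef := by
    intro i
    simp only []
    rw [hTeq i]
    have key : fromBlocks (PP i) 0 0 (E2 i) - fromBlocks (CC i) (DD i) (DD i) (EE i)
        = fromBlocks (((t : ℝ) : ℂ) • (DD i * DD i)) (-(DD i)) (-(DD i))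
            (((t⁻¹ : ℝ) : ℂ) • 1) := by
      rw [fromBlocks_sub']
      simp only [hPP, hE2]
      refine Matrix.fromBlocks_inj.mpr ⟨?_, ?_, ?_, ?_⟩ <;> abel
    rw [key]
    exact offdiag_psd t ht (hDh i)
  have h1 := hmono (fun j => star U * X j * U) (fun j => fromBlocks (PP j) 0 0 (E2 j))
    hTpd hRpd hdiff1
  rw [hsum PP E2 hPpd hE2pd, hunit U hUmem X hXpd, hsum A B hA hB, hU, rotM_conj,
    hsl2, hrl2] at h1
  have h1TL := h1.submatrix Sum.inl
  simp only [Matrix.submatrix_sub, Pi.sub_apply, fromBlocks_submatrix_inl] at h1TL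
  -- step 2 : monotonicity against the rotated doubled tuple
  set V : Matrix (Fin n ⊕ Fin n) (Fin n ⊕ Fin n) ℂ := rotM (Fin n) cc σσ with hV
  have hVmem : V ∈ Matrix.unitaryGroup (Fin n ⊕ Fin n) ℂ := rotM_mem _ _ hcs
  set DS : Fin k → Matrix (Fin n ⊕ Fin n) (Fin n ⊕ Fin n) ℂ :=
    fun i => fromBlocks (CC i) 0 0 (QQ i) with hDS
  have hDSpd : ∀ i, (DS i).PosDef := fun i => fromBlocks_posDef (hCpd i) (hQpd i)
  set Y : Fin k → Matrix (Fin n) (Fin n) ℂ :=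
    fun i => ((cc ^ 2 : ℝ) : ℂ) • CC i with hY
  have hYpd : ∀ i, (Y i).PosDef := fun i => myPD.smul (hCpd i) (by positivity)
  have hT2pd : ∀ i, ((fun j => star V * DS j * V) i).PosDef :=
    fun i => posDef_unitary_conj hVmem (hDSpd i)
  have hR2pd : ∀ i, ((fun j => fromBlocks (PP j) 0 0 (Y j)) i).PosDef :=
    fun i => fromBlocks_posDef (hPpd i) (hYpd i)
  have hdiff2 : ∀ i, ((fun j => star V * DS j * V) i
      - (fun j => fromBlocks (PP j) 0 0 (Y j)) i).PosSemidef := by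
    intro i
    simp only []
    rw [hV, hDS, rotM_conj, fromBlocks_sub']
    simp only [hPP, hY, hQQ]
    have := step2_key (hCpd i) cc σσ t K hcs ht.le hKpos htK (hdom i)
    convert this using 2 <;> rw [sub_zero]
  have h2 := hmono (fun j => fromBlocks (PP j) 0 0 (Y j)) (fun j => star V * DS j * V)
    hR2pd hT2pd hdiff2
  rw [hsum PP Y hPpd hYpd, hunit V hVmem DS hDSpd, hsum CC QQ hCpd hQpd, hV, rotM_conj]
    at h2
  have h2TL := h2.submatrix Sum.inl
  simp only [Matrix.submatrix_sub, Pi.sub_apply, fromBlocks_submatrix_inl] at h2TL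
  -- combine the two inequalities
  have hsumm := h2TL.add h1TL
  have heq : ((cc ^ 2 : ℝ) : ℂ) • F CC + ((σσ ^ 2 : ℝ) : ℂ) • F QQ - F PP
      + (F PP - (((l : ℝ) : ℂ) • F A + ((1 - l : ℝ) : ℂ) • F B))
      = F CC - ((l : ℂ) • F A + ((1 - l : ℝ) : ℂ) • F B)
        + ((ε : ℝ) : ℂ) • (F QQ - F CC) := by
    rw [hcc2, hσσ2]
    push_cast
    module
  rwa [heq] at hsumm
end

section
/- (Douglas' lemma) Let A and B be bounded linear operators on a Hilbert space H. The following are equivalent: (1) range(A) ⊆ range(B); (2) AA* ≤ λ²BB* for some λ ≥ 0; (3) there exists a bounded linear operator C with A = BC. -/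
open ContinuousLinearMap Filter Topology InnerProductSpace RCLike

section Douglas

variable {H : Type*} [NormedAddCommGroup H] [InnerProductSpace ℂ H] [CompleteSpace H]

local notation "⟪" x ", " y "⟫" => @inner ℂ _ _ x y

private lemma douglas_re (A B : H →L[ℂ] H) (l : ℝ) (x : H) :
    ((l ^ 2 : ℝ) • (B.comp (ContinuousLinearMap.adjoint B)) -
        A.comp (ContinuousLinearMap.adjoint A)).reApplyInnerSelf x
      = l ^ 2 * ‖ContinuousLinearMap.adjoint B x‖ ^ 2
        - ‖ContinuousLinearMap.adjoint A x‖ ^ 2 := by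
  have hB : ⟪B (ContinuousLinearMap.adjoint B x), x⟫
      = ⟪ContinuousLinearMap.adjoint B x, ContinuousLinearMap.adjoint B x⟫ :=
    (adjoint_inner_right B _ _).symm
  have hA : ⟪A (ContinuousLinearMap.adjoint A x), x⟫
      = ⟪ContinuousLinearMap.adjoint A x, ContinuousLinearMap.adjoint A x⟫ :=
    (adjoint_inner_right A _ _).symm
  rw [reApplyInnerSelf_apply, sub_apply, smul_apply, comp_apply, comp_apply,
    RCLike.real_smul_eq_coe_smul (K := ℂ),
    inner_sub_left, inner_smul_real_left, hB, hA, map_sub, RCLike.smul_re,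
    inner_self_eq_norm_sq (𝕜 := ℂ), inner_self_eq_norm_sq (𝕜 := ℂ)]

omit [CompleteSpace H] in
private lemma douglas_unique (B : H →L[ℂ] H) {z w : H}
    (hz : z ∈ (LinearMap.ker (B : H →ₗ[ℂ] H))ᗮ) (hw : w ∈ (LinearMap.ker (B : H →ₗ[ℂ] H))ᗮ) (h : B z = B w) : z = w := by
  have hm : z - w ∈ LinearMap.ker (B : H →ₗ[ℂ] H) := by
    simp [LinearMap.mem_ker, map_sub, h]
  have hperp : z - w ∈ (LinearMap.ker (B : H →ₗ[ℂ] H))ᗮ := Submodule.sub_mem _ hz hw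
  have h0 : ⟪z - w, z - w⟫ = 0 := hperp (z - w) hm
  have := inner_self_eq_zero.mp h0
  exact sub_eq_zero.mp this

private lemma douglas_factor (A B : H →L[ℂ] H) (h : Set.range A ⊆ Set.range B) :
    ∃ C : H →L[ℂ] H, A = B.comp C := by
  classical
  set K : Submodule ℂ H := LinearMap.ker (B : H →ₗ[ℂ] H) with hKdef
  haveI : CompleteSpace K := (ContinuousLinearMap.isClosed_ker B).completeSpace_coe
  have hpre : ∀ x : H, ∃ y, B y = A x := fun x => h (Set.mem_range_self x)
  let c : H → H := fun x => (Submodule.orthogonalProjection Kᗮ (hpre x).choose : H)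
  have hmem : ∀ x, c x ∈ Kᗮ := fun x => (Submodule.orthogonalProjection Kᗮ _).2
  have hBc : ∀ x, B (c x) = A x := by
    intro x
    have hd : ((Submodule.orthogonalProjection K (hpre x).choose : H)) + c x = (hpre x).choose :=
      Submodule.starProjection_add_starProjection_orthogonal (K := K) _
    have hker : B ((Submodule.orthogonalProjection K (hpre x).choose : H)) = 0 :=
      (Submodule.orthogonalProjection K (hpre x).choose).2
    have : B ((Submodule.orthogonalProjection K (hpre x).choose : H)) + B (c x) = A x := by
      rw [← map_add, hd, (hpre x).choose_spec]
    rwa [hker, zero_add] at this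
  have huniq : ∀ z w, z ∈ Kᗮ → w ∈ Kᗮ → B z = B w → z = w := fun z w hz hw hzw =>
    douglas_unique B hz hw hzw
  let cL : H →ₗ[ℂ] H :=
    { toFun := c
      map_add' := fun x y => huniq _ _ (hmem _) (Submodule.add_mem _ (hmem x) (hmem y))
        (by rw [hBc, map_add, map_add, hBc, hBc])
      map_smul' := fun a x => huniq _ _ (hmem _) (Submodule.smul_mem _ a (hmem x))
        (by rw [hBc, map_smul, map_smul, hBc]; rfl) }
  have hcont : Continuous cL := by
    apply LinearMap.continuous_of_seq_closed_graph
    intro u x y hu hcu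
    have h1 : Tendsto (fun n => B (c (u n))) atTop (𝓝 (B y)) :=
      (B.continuous.tendsto y).comp hcu
    have h2 : Tendsto (fun n => A (u n)) atTop (𝓝 (A x)) :=
      (A.continuous.tendsto x).comp hu
    have h3 : (fun n => B (c (u n))) = fun n => A (u n) := funext fun n => hBc (u n)
    have hBy : B y = A x := tendsto_nhds_unique (h3 ▸ h1) h2
    have hymem : y ∈ Kᗮ :=
      K.isClosed_orthogonal.mem_of_tendsto hcu (Eventually.of_forall fun n => hmem (u n))
    exact huniq y (c x) hymem (hmem x) (by rw [hBy, hBc])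
  refine ⟨⟨cL, hcont⟩, ?_⟩
  ext x
  exact (hBc x).symm

private lemma douglas_range (A B : H →L[ℂ] H) {l : ℝ} (hl : 0 ≤ l)
    (hpos : ((l ^ 2 : ℝ) • (B.comp (ContinuousLinearMap.adjoint B)) -
      A.comp (ContinuousLinearMap.adjoint A)).IsPositive) :
    Set.range A ⊆ Set.range B := by
  classical
  have hnorm : ∀ x, ‖ContinuousLinearMap.adjoint A x‖ ≤ l * ‖ContinuousLinearMap.adjoint B x‖ := by
    intro x
    have h0 := hpos.2 x
    rw [douglas_re] at h0
    have h2 : ‖ContinuousLinearMap.adjoint A x‖ ^ 2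
        ≤ (l * ‖ContinuousLinearMap.adjoint B x‖) ^ 2 := by nlinarith
    exact (pow_le_pow_iff_left₀ (norm_nonneg _)
      (mul_nonneg hl (norm_nonneg _)) two_ne_zero).mp h2
  have hw : ∀ {x y : H}, ContinuousLinearMap.adjoint B x = ContinuousLinearMap.adjoint B y →
      ContinuousLinearMap.adjoint A x = ContinuousLinearMap.adjoint A y := by
    intro x y hxy
    have h1 := hnorm (x - y)
    rw [map_sub, map_sub, hxy, sub_self, norm_zero, mul_zero] at h1
    have h2 : ContinuousLinearMap.adjoint A x - ContinuousLinearMap.adjoint A y = 0 :=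
      norm_le_zero_iff.mp h1
    exact sub_eq_zero.mp h2
  rintro _ ⟨u, rfl⟩
  set S : Submodule ℂ H := LinearMap.range (ContinuousLinearMap.adjoint B : H →ₗ[ℂ] H) with hSdef
  have sel : ∀ s : S, ∃ y, ContinuousLinearMap.adjoint B y = (s : H) := fun s => s.2
  let ψ : S →ₗ[ℂ] ℂ :=
    { toFun := fun s => ⟪u, ContinuousLinearMap.adjoint A (sel s).choose⟫
      map_add' := by
        intro s t
        have hb : ContinuousLinearMap.adjoint B (sel (s + t)).choose
            = ContinuousLinearMap.adjoint B ((sel s).choose + (sel t).choose) := by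
          rw [map_add, (sel s).choose_spec, (sel t).choose_spec, (sel (s + t)).choose_spec]
          rfl
        rw [hw hb, map_add, inner_add_right]
      map_smul' := by
        intro a s
        have hb : ContinuousLinearMap.adjoint B (sel (a • s)).choose
            = ContinuousLinearMap.adjoint B (a • (sel s).choose) := by
          rw [map_smul, (sel s).choose_spec, (sel (a • s)).choose_spec]
          rfl
        rw [hw hb, map_smul, inner_smul_right]
        rfl }
  have hψbound : ∀ s : S, ‖ψ s‖ ≤ (l * ‖u‖) * ‖s‖ := by
    intro s
    have h1 : ‖ψ s‖ ≤ ‖u‖ * ‖ContinuousLinearMap.adjoint A (sel s).choose‖ :=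
      norm_inner_le_norm _ _
    have h2 := hnorm (sel s).choose
    rw [(sel s).choose_spec] at h2
    calc ‖ψ s‖ ≤ ‖u‖ * ‖ContinuousLinearMap.adjoint A (sel s).choose‖ := h1
      _ ≤ ‖u‖ * (l * ‖(s : H)‖) := by
          exact mul_le_mul_of_nonneg_left h2 (norm_nonneg u)
      _ = (l * ‖u‖) * ‖s‖ := by rw [← Submodule.coe_norm]; ring
  let ψc : S →L[ℂ] ℂ := LinearMap.mkContinuous ψ (l * ‖u‖) hψbound
  obtain ⟨g, hg, -⟩ := exists_extension_norm_eq S ψc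
  set v : H := (InnerProductSpace.toDual ℂ H).symm g with hvdef
  refine ⟨v, ?_⟩
  refine ext_inner_right ℂ fun w => ?_
  have hm : ContinuousLinearMap.adjoint B w ∈ S := ⟨w, rfl⟩
  have h1 : ⟪B v, w⟫ = g (ContinuousLinearMap.adjoint B w) := by
    rw [← adjoint_inner_right, hvdef, toDual_symm_apply]
  have h2 : g (ContinuousLinearMap.adjoint B w) = ψ ⟨ContinuousLinearMap.adjoint B w, hm⟩ :=
    hg ⟨ContinuousLinearMap.adjoint B w, hm⟩
  have hb : ContinuousLinearMap.adjoint B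
        (sel ⟨ContinuousLinearMap.adjoint B w, hm⟩).choose
      = ContinuousLinearMap.adjoint B w :=
    (sel ⟨ContinuousLinearMap.adjoint B w, hm⟩).choose_spec
  have h3 : ψ ⟨ContinuousLinearMap.adjoint B w, hm⟩ = ⟪u, ContinuousLinearMap.adjoint A w⟫ := by
    show ⟪u, ContinuousLinearMap.adjoint A _⟫ = _
    rw [hw hb]
  rw [h1, h2, h3, adjoint_inner_right]

private lemma douglas_pos (B C : H →L[ℂ] H) :
    ∃ l : ℝ, 0 ≤ l ∧
      ((l ^ 2 : ℝ) • (B.comp (ContinuousLinearMap.adjoint B)) -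
        (B.comp C).comp (ContinuousLinearMap.adjoint (B.comp C))).IsPositive := by
  refine ⟨‖C‖, norm_nonneg _, ?_, ?_⟩
  · have h1 : IsSelfAdjoint (B.comp (ContinuousLinearMap.adjoint B)) := by
      rw [IsSelfAdjoint, star_eq_adjoint, adjoint_comp, adjoint_adjoint]
    have h2 : IsSelfAdjoint ((B.comp C).comp (ContinuousLinearMap.adjoint (B.comp C))) := by
      rw [IsSelfAdjoint, star_eq_adjoint, adjoint_comp, adjoint_adjoint]
    exact ContinuousLinearMap.isSelfAdjoint_iff_isSymmetric.mp ((IsSelfAdjoint.smul (star_trivial (‖C‖ ^ 2 : ℝ)) h1).sub h2)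
  · intro x
    rw [douglas_re (B.comp C) B ‖C‖ x]
    have h1 : ‖ContinuousLinearMap.adjoint (B.comp C) x‖
        ≤ ‖C‖ * ‖ContinuousLinearMap.adjoint B x‖ := by
      rw [adjoint_comp, comp_apply]
      calc ‖ContinuousLinearMap.adjoint C (ContinuousLinearMap.adjoint B x)‖
          ≤ ‖ContinuousLinearMap.adjoint C‖ * ‖ContinuousLinearMap.adjoint B x‖ :=
            le_opNorm _ _
        _ = ‖C‖ * ‖ContinuousLinearMap.adjoint B x‖ := by
            rw [LinearIsometryEquiv.norm_map]
    nlinarith [norm_nonneg (ContinuousLinearMap.adjoint (B.comp C) x),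
      norm_nonneg (ContinuousLinearMap.adjoint B x), norm_nonneg C]

end Douglas

/-- **Douglas' lemma.** For bounded operators `A`, `B` on a Hilbert space `H`, the
following are equivalent: (1) `range A ⊆ range B`; (2) `A A* ≤ λ² B B*` for some `λ ≥ 0`;
(3) `A = B C` for some bounded operator `C`. -/
theorem douglas_lemma
    {H : Type*} [NormedAddCommGroup H] [InnerProductSpace ℂ H] [CompleteSpace H]
    (A B : H →L[ℂ] H) :
    (Set.range A ⊆ Set.range B ↔
      ∃ C : H →L[ℂ] H, A = B.comp C) ∧
    ((∃ l : ℝ, 0 ≤ l ∧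
        ((l ^ 2 : ℝ) • (B.comp (ContinuousLinearMap.adjoint B)) -
          A.comp (ContinuousLinearMap.adjoint A)).IsPositive) ↔
      ∃ C : H →L[ℂ] H, A = B.comp C) := by
  constructor
  · constructor
    · exact douglas_factor A B
    · rintro ⟨C, rfl⟩ _ ⟨y, rfl⟩
      exact ⟨C y, rfl⟩
  · constructor
    · rintro ⟨l, hl, hpos⟩
      exact douglas_factor A B (douglas_range A B hl hpos)
    · rintro ⟨C, rfl⟩
      exact douglas_pos B C
end

section
/- Let A = [[A₁₁, A₁₂],[A₂₁, A₂₂]] be a bounded block operator matrix on H₁ ⊕ H₂ with nonnegative imaginary part, i.e. (A - A*)/(2i) ≥ 0, and suppose A₁₁ is boundedly invertible. Then the Schur complement S(A) = A₂₂ - A₂₁A₁₁⁻¹A₁₂ also has nonnegative imaginary part. Similarly, if the real part (A + A*)/2 ≥ 0, then the real part of S(A) is ≥ 0. -/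
open ContinuousLinearMap

variable {H₁ H₂ : Type}

/-- The block operator `[[A₁₁, A₁₂],[A₂₁, A₂₂]]` on the Hilbert space direct sum
`H₁ ⊕₂ H₂ = WithLp 2 (H₁ × H₂)`. -/
noncomputable def blockCLM [NormedAddCommGroup H₁] [InnerProductSpace ℂ H₁] [CompleteSpace H₁]
    [NormedAddCommGroup H₂] [InnerProductSpace ℂ H₂] [CompleteSpace H₂]
    (A11 : H₁ →L[ℂ] H₁) (A12 : H₂ →L[ℂ] H₁) (A21 : H₁ →L[ℂ] H₂) (A22 : H₂ →L[ℂ] H₂) :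
    WithLp 2 (H₁ × H₂) →L[ℂ] WithLp 2 (H₁ × H₂) :=
  ((WithLp.prodContinuousLinearEquiv 2 ℂ H₁ H₂).symm.toContinuousLinearMap).comp
    ((((A11.comp (fst ℂ H₁ H₂) + A12.comp (snd ℂ H₁ H₂))).prod
        ((A21.comp (fst ℂ H₁ H₂) + A22.comp (snd ℂ H₁ H₂)))).comp
      (WithLp.prodContinuousLinearEquiv 2 ℂ H₁ H₂).toContinuousLinearMap)

/-- The imaginary part `(T - T*)/(2i)` of a bounded operator. -/
noncomputable def imCLM {H : Type} [NormedAddCommGroup H] [InnerProductSpace ℂ H]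
    [CompleteSpace H] (T : H →L[ℂ] H) : H →L[ℂ] H :=
  (2 * Complex.I)⁻¹ • (T - adjoint T)

/-- The real part `(T + T*)/2` of a bounded operator. -/
noncomputable def reCLM {H : Type} [NormedAddCommGroup H] [InnerProductSpace ℂ H]
    [CompleteSpace H] (T : H →L[ℂ] H) : H →L[ℂ] H :=
  (2 : ℂ)⁻¹ • (T + adjoint T)

local notation "⟪" x ", " y "⟫" => @inner ℂ _ _ x y

lemma imCLM_sa {H : Type} [NormedAddCommGroup H] [InnerProductSpace ℂ H]
    [CompleteSpace H] (T : H →L[ℂ] H) : IsSelfAdjoint (imCLM T) := by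
  rw [isSelfAdjoint_iff']
  unfold imCLM
  rw [map_smulₛₗ, map_sub, adjoint_adjoint,
    show (starRingEnd ℂ) (2*Complex.I)⁻¹ = -(2*Complex.I)⁻¹ by
      norm_num [map_inv₀, Complex.ext_iff],
    neg_smul, ← smul_neg, neg_sub]

lemma reCLM_sa {H : Type} [NormedAddCommGroup H] [InnerProductSpace ℂ H]
    [CompleteSpace H] (T : H →L[ℂ] H) : IsSelfAdjoint (reCLM T) := by
  rw [isSelfAdjoint_iff']
  unfold reCLM
  rw [map_smulₛₗ, map_add, adjoint_adjoint,
    show (starRingEnd ℂ) (2:ℂ)⁻¹ = (2:ℂ)⁻¹ by simp [map_inv₀, Complex.ext_iff], add_comm]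

lemma inner_imCLM {H : Type} [NormedAddCommGroup H] [InnerProductSpace ℂ H]
    [CompleteSpace H] (T : H →L[ℂ] H) (x : H) :
    ⟪(imCLM T) x, x⟫ =
      (starRingEnd ℂ) (2*Complex.I)⁻¹ * (⟪T x, x⟫ - (starRingEnd ℂ) ⟪T x, x⟫) := by
  rw [imCLM, smul_apply, inner_smul_left, sub_apply, inner_sub_left, adjoint_inner_left,
    inner_conj_symm]

lemma inner_reCLM {H : Type} [NormedAddCommGroup H] [InnerProductSpace ℂ H]
    [CompleteSpace H] (T : H →L[ℂ] H) (x : H) :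
    ⟪(reCLM T) x, x⟫ =
      (starRingEnd ℂ) (2:ℂ)⁻¹ * (⟪T x, x⟫ + (starRingEnd ℂ) ⟪T x, x⟫) := by
  rw [reCLM, smul_apply, inner_smul_left, add_apply, inner_add_left, adjoint_inner_left,
    inner_conj_symm]

/-- If a block operator `A = [[A₁₁,A₁₂],[A₂₁,A₂₂]]` has nonnegative imaginary part and
`A₁₁` is boundedly invertible, then the Schur complement `S(A) = A₂₂ - A₂₁ A₁₁⁻¹ A₁₂` has
nonnegative imaginary part; similarly for real parts. -/
theorem schur_complement_im_re_nonneg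
    [NormedAddCommGroup H₁] [InnerProductSpace ℂ H₁] [CompleteSpace H₁]
    [NormedAddCommGroup H₂] [InnerProductSpace ℂ H₂] [CompleteSpace H₂]
    (A11 : H₁ →L[ℂ] H₁) (A12 : H₂ →L[ℂ] H₁) (A21 : H₁ →L[ℂ] H₂) (A22 : H₂ →L[ℂ] H₂)
    (A11inv : H₁ →L[ℂ] H₁) (h1 : A11.comp A11inv = 1) (h2 : A11inv.comp A11 = 1) :
    ((imCLM (blockCLM A11 A12 A21 A22)).IsPositive →
      (imCLM (A22 - (A21.comp (A11inv.comp A12)))).IsPositive) ∧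
    ((reCLM (blockCLM A11 A12 A21 A22)).IsPositive →
      (reCLM (A22 - (A21.comp (A11inv.comp A12)))).IsPositive) := by
  set S := A22 - (A21.comp (A11inv.comp A12)) with hS
  have key : ∀ x₂ : H₂,
      ⟪(blockCLM A11 A12 A21 A22)
          ((WithLp.prodContinuousLinearEquiv 2 ℂ H₁ H₂).symm (-(A11inv (A12 x₂)), x₂)),
        (WithLp.prodContinuousLinearEquiv 2 ℂ H₁ H₂).symm (-(A11inv (A12 x₂)), x₂)⟫
        = ⟪S x₂, x₂⟫ := by
    intro x₂
    have e1 : A11 (A11inv (A12 x₂)) = A12 x₂ := congrFun (congrArg DFunLike.coe h1) (A12 x₂)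
    simp only [blockCLM, comp_apply, ContinuousLinearEquiv.coe_coe,
      ContinuousLinearEquiv.apply_symm_apply, prod_apply, add_apply, coe_fst', coe_snd',
      map_neg]
    rw [WithLp.prod_inner_apply, e1]
    simp [hS, inner_add_left, inner_neg_left, sub_eq_add_neg, add_comm]
  constructor
  · rintro ⟨_, hpos⟩
    refine ⟨(imCLM_sa S).isSymmetric, fun x₂ => ?_⟩
    have h := hpos ((WithLp.prodContinuousLinearEquiv 2 ℂ H₁ H₂).symm (-(A11inv (A12 x₂)), x₂))
    rwa [reApplyInnerSelf, inner_imCLM, key x₂, ← inner_imCLM, ← reApplyInnerSelf] at h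
  · rintro ⟨_, hpos⟩
    refine ⟨(reCLM_sa S).isSymmetric, fun x₂ => ?_⟩
    have h := hpos ((WithLp.prodContinuousLinearEquiv 2 ℂ H₁ H₂).symm (-(A11inv (A12 x₂)), x₂))
    rwa [reApplyInnerSelf, inner_reCLM, key x₂, ← inner_reCLM, ← reApplyInnerSelf] at h
end

section
/- The Schur complement is operator monotone and operator concave on positive semi-definite block operators: if A = [[A₁₁,A₁₂],[A₂₁,A₂₂]] and B = [[B₁₁,B₁₂],[B₂₁,B₂₂]] are conformally partitioned positive semi-definite bounded block operator matrices with invertible (2,2)-blocks and A ≤ B, then S(A) ≤ S(B), where S(A) = A₁₁ - A₁₂A₂₂⁻¹A₂₁; moreover (1-λ)S(A) + λS(B) ≤ S((1-λ)A + λB) for all λ ∈ [0,1]. -/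
open ContinuousLinearMap

variable {H₁ H₂ : Type}

section Aux
variable {E : Type*} [NormedAddCommGroup E] [InnerProductSpace ℂ E] [CompleteSpace E]

lemma isPositive_of_exists_real {D : E →L[ℂ] E}
    (h : ∀ x : E, ∃ r : ℝ, 0 ≤ r ∧ (inner ℂ (D x) x : ℂ) = (r : ℂ)) : D.IsPositive := by
  rw [isPositive_iff_complex]
  intro x
  obtain ⟨r, hr, hx⟩ := h x
  rw [hx]
  simp [hr]

lemma isPositive_exists_real {T : E →L[ℂ] E} (hT : T.IsPositive) (y : E) :
    ∃ r : ℝ, 0 ≤ r ∧ (inner ℂ (T y) y : ℂ) = (r : ℂ) := by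
  rw [isPositive_iff_complex] at hT
  exact ⟨_, (hT y).2, (hT y).1.symm⟩

lemma quad_split {T : E →L[ℂ] E} (hT : IsSelfAdjoint T) (v w : E)
    (h : (inner ℂ (T v) (w - v) : ℂ) = 0) :
    (inner ℂ (T w) w : ℂ) = inner ℂ (T v) v + inner ℂ (T (w - v)) (w - v) := by
  have h2 : (inner ℂ (T (w - v)) v : ℂ) = 0 := by
    have h3 := ContinuousLinearMap.adjoint_inner_left T (w - v) v
    rw [hT.adjoint_eq] at h3
    rw [← inner_conj_symm, ← h3, h, map_zero]
  have hw : w = v + (w - v) := by abel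
  calc (inner ℂ (T w) w : ℂ) = inner ℂ (T (v + (w - v))) (v + (w - v)) := by rw [← hw]
    _ = inner ℂ (T v) v + inner ℂ (T v) (w - v) + (inner ℂ (T (w - v)) v + inner ℂ (T (w - v)) (w - v)) := by
        rw [map_add, inner_add_left, inner_add_right, inner_add_right]
    _ = inner ℂ (T v) v + inner ℂ (T (w - v)) (w - v) := by rw [h, h2]; ring

end Aux

section Blocks
variable [NormedAddCommGroup H₁] [InnerProductSpace ℂ H₁] [CompleteSpace H₁]
    [NormedAddCommGroup H₂] [InnerProductSpace ℂ H₂] [CompleteSpace H₂]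

noncomputable def scVec (P21 : H₁ →L[ℂ] H₂) (P22inv : H₂ →L[ℂ] H₂) (x : H₁) :
    WithLp 2 (H₁ × H₂) :=
  (WithLp.equiv 2 (H₁ × H₂)).symm (x, -(P22inv (P21 x)))

variable (P11 : H₁ →L[ℂ] H₁) (P12 : H₂ →L[ℂ] H₁) (P21 : H₁ →L[ℂ] H₂) (P22 : H₂ →L[ℂ] H₂)

lemma quad_scVec (P22inv : H₂ →L[ℂ] H₂) (hinv : P22.comp P22inv = 1) (x : H₁) :
    (inner ℂ (blockCLM P11 P12 P21 P22 (scVec P21 P22inv x)) (scVec P21 P22inv x) : ℂ)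
      = inner ℂ ((P11 - P12.comp (P22inv.comp P21)) x) x := by
  have h2 : P22 (P22inv (P21 x)) = P21 x := by
    have := congrArg (fun T : H₂ →L[ℂ] H₂ => T (P21 x)) hinv
    simpa using this
  show (inner ℂ (P11 (scVec P21 P22inv x).fst + P12 (scVec P21 P22inv x).snd) (scVec P21 P22inv x).fst
      + inner ℂ (P21 (scVec P21 P22inv x).fst + P22 (scVec P21 P22inv x).snd) (scVec P21 P22inv x).snd : ℂ)
      = inner ℂ ((P11 - P12.comp (P22inv.comp P21)) x) x
  simp only [scVec, WithLp.equiv_symm_apply, WithLp.toLp_fst, WithLp.toLp_snd, map_neg, h2]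
  simp [sub_eq_add_neg]

lemma orth_scVec (P22inv : H₂ →L[ℂ] H₂) (hinv : P22.comp P22inv = 1) (x : H₁)
    (w : WithLp 2 (H₁ × H₂)) (hw : w.fst = x) :
    (inner ℂ (blockCLM P11 P12 P21 P22 (scVec P21 P22inv x)) (w - scVec P21 P22inv x) : ℂ) = 0 := by
  have h2 : P22 (P22inv (P21 x)) = P21 x := by
    have := congrArg (fun T : H₂ →L[ℂ] H₂ => T (P21 x)) hinv
    simpa using this
  show (inner ℂ (P11 (scVec P21 P22inv x).fst + P12 (scVec P21 P22inv x).snd)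
        ((w - scVec P21 P22inv x).fst)
      + inner ℂ (P21 (scVec P21 P22inv x).fst + P22 (scVec P21 P22inv x).snd)
        ((w - scVec P21 P22inv x).snd) : ℂ) = 0
  have hfst : (w - scVec P21 P22inv x).fst = 0 := by
    show w.fst - (scVec P21 P22inv x).fst = 0
    rw [hw]; exact sub_self x
  simp only [scVec, WithLp.equiv_symm_apply, WithLp.toLp_fst, WithLp.toLp_snd, map_neg, h2, hfst]
  simp [hw]

/-- The variational inequality: any `w` with first component `x` gives a quadratic form
value exceeding the Schur complement form by a nonnegative real. -/
lemma schur_min (P22inv : H₂ →L[ℂ] H₂) (hP : (blockCLM P11 P12 P21 P22).IsPositive)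
    (hinv : P22.comp P22inv = 1) (x : H₁) (w : WithLp 2 (H₁ × H₂)) (hw : w.fst = x) :
    ∃ r : ℝ, 0 ≤ r ∧ (inner ℂ (blockCLM P11 P12 P21 P22 w) w : ℂ)
      = inner ℂ ((P11 - P12.comp (P22inv.comp P21)) x) x + (r : ℂ) := by
  obtain ⟨r, hr, hq⟩ := isPositive_exists_real hP (w - scVec P21 P22inv x)
  refine ⟨r, hr, ?_⟩
  rw [quad_split hP.isSelfAdjoint _ _ (orth_scVec P11 P12 P21 P22 P22inv hinv x w hw),
    quad_scVec P11 P12 P21 P22 P22inv hinv x, hq]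

lemma inner_block_combo (A11 : H₁ →L[ℂ] H₁) (A12 : H₂ →L[ℂ] H₁) (A21 : H₁ →L[ℂ] H₂)
    (A22 : H₂ →L[ℂ] H₂) (B11 : H₁ →L[ℂ] H₁) (B12 : H₂ →L[ℂ] H₁) (B21 : H₁ →L[ℂ] H₂)
    (B22 : H₂ →L[ℂ] H₂) (l : ℝ) (v : WithLp 2 (H₁ × H₂)) :
    (inner ℂ (blockCLM ((1 - l) • A11 + l • B11) ((1 - l) • A12 + l • B12)
        ((1 - l) • A21 + l • B21) ((1 - l) • A22 + l • B22) v) v : ℂ)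
      = ((1 - l : ℝ) : ℂ) * inner ℂ (blockCLM A11 A12 A21 A22 v) v
        + (l : ℂ) * inner ℂ (blockCLM B11 B12 B21 B22 v) v := by
  show (inner ℂ (((1 - l) • A11 + l • B11) v.fst + ((1 - l) • A12 + l • B12) v.snd) v.fst
      + inner ℂ (((1 - l) • A21 + l • B21) v.fst + ((1 - l) • A22 + l • B22) v.snd) v.snd : ℂ)
    = ((1 - l : ℝ) : ℂ) * (inner ℂ (A11 v.fst + A12 v.snd) v.fst + inner ℂ (A21 v.fst + A22 v.snd) v.snd)
      + (l : ℂ) * (inner ℂ (B11 v.fst + B12 v.snd) v.fst + inner ℂ (B21 v.fst + B22 v.snd) v.snd)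
  simp only [add_apply, smul_apply, RCLike.real_smul_eq_coe_smul (K := ℂ), inner_add_left,
    inner_smul_left, map_sub, map_one, Complex.coe_algebraMap, Complex.conj_ofReal]
  push_cast
  ring

end Blocks

/-- The Schur complement is operator monotone and operator concave on positive
semi-definite block operators with boundedly invertible `(2,2)`-blocks. -/
theorem schur_complement_monotone_concave
    [NormedAddCommGroup H₁] [InnerProductSpace ℂ H₁] [CompleteSpace H₁]
    [NormedAddCommGroup H₂] [InnerProductSpace ℂ H₂] [CompleteSpace H₂]
    (A11 : H₁ →L[ℂ] H₁) (A12 : H₂ →L[ℂ] H₁) (A21 : H₁ →L[ℂ] H₂) (A22 : H₂ →L[ℂ] H₂)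
    (B11 : H₁ →L[ℂ] H₁) (B12 : H₂ →L[ℂ] H₁) (B21 : H₁ →L[ℂ] H₂) (B22 : H₂ →L[ℂ] H₂)
    (hA : (blockCLM A11 A12 A21 A22).IsPositive)
    (hB : (blockCLM B11 B12 B21 B22).IsPositive)
    (A22inv : H₂ →L[ℂ] H₂) (hA22 : A22.comp A22inv = 1) (hA22' : A22inv.comp A22 = 1)
    (B22inv : H₂ →L[ℂ] H₂) (hB22 : B22.comp B22inv = 1) (hB22' : B22inv.comp B22 = 1) :
    -- monotonicity: `A ≤ B` implies `S(A) ≤ S(B)`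
    ((blockCLM B11 B12 B21 B22 - blockCLM A11 A12 A21 A22).IsPositive →
      ((B11 - B12.comp (B22inv.comp B21)) - (A11 - A12.comp (A22inv.comp A21))).IsPositive) ∧
    -- concavity: `(1-λ)S(A) + λS(B) ≤ S((1-λ)A + λB)`
    (∀ l : ℝ, 0 ≤ l → l ≤ 1 →
      ∀ C22inv : H₂ →L[ℂ] H₂,
        ((1 - l) • A22 + l • B22).comp C22inv = 1 →
        C22inv.comp ((1 - l) • A22 + l • B22) = 1 →
      ((((1 - l) • A11 + l • B11) -
          ((1 - l) • A12 + l • B12).comp (C22inv.comp ((1 - l) • A21 + l • B21))) -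
        ((1 - l) • (A11 - A12.comp (A22inv.comp A21)) +
          l • (B11 - B12.comp (B22inv.comp B21)))).IsPositive) := by
  constructor
  · intro hmono
    apply isPositive_of_exists_real
    intro x
    obtain ⟨r₂, hr₂, hA'⟩ :=
      schur_min A11 A12 A21 A22 A22inv hA hA22 x (scVec B21 B22inv x) rfl
    obtain ⟨r₁, hr₁, hΔ⟩ := isPositive_exists_real hmono (scVec B21 B22inv x)
    have hB' := quad_scVec B11 B12 B21 B22 B22inv hB22 x
    have hD : (inner ℂ (((B11 - B12.comp (B22inv.comp B21))
          - (A11 - A12.comp (A22inv.comp A21))) x) x : ℂ)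
        = inner ℂ ((B11 - B12.comp (B22inv.comp B21)) x) x
          - inner ℂ ((A11 - A12.comp (A22inv.comp A21)) x) x := by
      rw [sub_apply, inner_sub_left]
    have hΔ' : (inner ℂ ((blockCLM B11 B12 B21 B22 - blockCLM A11 A12 A21 A22)
          (scVec B21 B22inv x)) (scVec B21 B22inv x) : ℂ)
        = inner ℂ (blockCLM B11 B12 B21 B22 (scVec B21 B22inv x)) (scVec B21 B22inv x)
          - inner ℂ (blockCLM A11 A12 A21 A22 (scVec B21 B22inv x)) (scVec B21 B22inv x) := by
      rw [sub_apply, inner_sub_left]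
    refine ⟨r₁ + r₂, by positivity, ?_⟩
    rw [hD, Complex.ofReal_add]
    linear_combination -hB' + hA' + hΔ - hΔ'
  · intro l hl0 hl1 C22inv hC hC'
    apply isPositive_of_exists_real
    intro x
    obtain ⟨rA, hrA, hA'⟩ := schur_min A11 A12 A21 A22 A22inv hA hA22 x
      (scVec ((1 - l) • A21 + l • B21) C22inv x) rfl
    obtain ⟨rB, hrB, hB'⟩ := schur_min B11 B12 B21 B22 B22inv hB hB22 x
      (scVec ((1 - l) • A21 + l • B21) C22inv x) rfl
    have hq := quad_scVec ((1 - l) • A11 + l • B11) ((1 - l) • A12 + l • B12)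
      ((1 - l) • A21 + l • B21) ((1 - l) • A22 + l • B22) C22inv hC x
    have hcombo := inner_block_combo A11 A12 A21 A22 B11 B12 B21 B22 l
      (scVec ((1 - l) • A21 + l • B21) C22inv x)
    have h1l : (0 : ℝ) ≤ 1 - l := by linarith
    have hD : (inner ℂ (((((1 - l) • A11 + l • B11) -
          ((1 - l) • A12 + l • B12).comp (C22inv.comp ((1 - l) • A21 + l • B21))) -
        ((1 - l) • (A11 - A12.comp (A22inv.comp A21)) +
          l • (B11 - B12.comp (B22inv.comp B21)))) x) x : ℂ)
        = inner ℂ ((((1 - l) • A11 + l • B11) -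
            ((1 - l) • A12 + l • B12).comp (C22inv.comp ((1 - l) • A21 + l • B21))) x) x
          - (((1 - l : ℝ) : ℂ) * inner ℂ ((A11 - A12.comp (A22inv.comp A21)) x) x
            + ((l : ℝ) : ℂ) * inner ℂ ((B11 - B12.comp (B22inv.comp B21)) x) x) := by
      have hsm : ∀ (r : ℝ) (y : H₁), (inner ℂ (r • y) x : ℂ) = (r : ℂ) * inner ℂ y x := by
        intro r y
        rw [RCLike.real_smul_eq_coe_smul (K := ℂ), inner_smul_left, RCLike.conj_ofReal]
        norm_cast
      rw [sub_apply, inner_sub_left, add_apply, smul_apply, smul_apply, inner_add_left, hsm, hsm]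
    refine ⟨(1 - l) * rA + l * rB,
      add_nonneg (mul_nonneg h1l hrA) (mul_nonneg hl0 hrB), ?_⟩
    rw [Complex.ofReal_sub, Complex.ofReal_one] at hcombo hD
    rw [hD, Complex.ofReal_add, Complex.ofReal_mul, Complex.ofReal_mul, Complex.ofReal_sub,
      Complex.ofReal_one]
    linear_combination -hq + hcombo + (1 - (l : ℂ)) * hA' + (l : ℂ) * hB'
end

section
/- Let F be a Fréchet-differentiable free function on k-tuples of positive definite operators with values in self-adjoint operators. Then F is operator monotone if and only if its Fréchet derivative satisfies DF(X)(H) ≥ 0 for every X in the domain and every tuple H ≥ 0 of positive semi-definite self-adjoint operators. -/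
open scoped InnerProductSpace

/-- A positive definite (boundedly invertible positive) operator. -/
def IsPosDefCLM {E : Type*} [NormedAddCommGroup E] [InnerProductSpace ℂ E] [CompleteSpace E]
    (A : E →L[ℂ] E) : Prop :=
  A.IsPositive ∧ ∃ c : ℝ, 0 < c ∧ ∀ x : E, c * ‖x‖ ^ 2 ≤ (⟪A x, x⟫_ℂ).re


open ContinuousLinearMap Filter Topology

set_option linter.unusedSectionVars false

section aux
variable {E : Type*} [NormedAddCommGroup E] [InnerProductSpace ℂ E] [CompleteSpace E]

lemma real_smul_eq_complex (t : ℝ) (A : E →L[ℂ] E) : t • A = (t : ℂ) • A := by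
  rw [← smul_one_smul ℂ t A]
  norm_num

lemma isSelfAdjoint_real_smul {A : E →L[ℂ] E} (hA : IsSelfAdjoint A) (t : ℝ) :
    IsSelfAdjoint (t • A) := by
  rw [real_smul_eq_complex, IsSelfAdjoint, star_smul, hA.star_eq]
  norm_num

lemma re_inner_real_smul (t : ℝ) (A : E →L[ℂ] E) (x : E) :
    (⟪(t • A) x, x⟫_ℂ).re = t * (⟪A x, x⟫_ℂ).re := by
  rw [real_smul_eq_complex, smul_apply, inner_smul_left, Complex.conj_ofReal,
    Complex.re_ofReal_mul]

lemma isPositive_real_smul {A : E →L[ℂ] E} (hA : A.IsPositive) {t : ℝ} (ht : 0 ≤ t) :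
    (t • A).IsPositive := by
  refine ⟨(isSelfAdjoint_real_smul hA.isSelfAdjoint t).isSymmetric, fun x => ?_⟩
  have := hA.2 x
  rw [reApplyInnerSelf_apply] at this ⊢
  rw [show (RCLike.re (⟪(t • A) x, x⟫_ℂ) : ℝ) = (⟪(t • A) x, x⟫_ℂ).re from rfl,
    re_inner_real_smul]
  exact mul_nonneg ht this

lemma re_inner_symmC {E : Type*} [NormedAddCommGroup E] [InnerProductSpace ℂ E]
    (x y : E) : (⟪x, y⟫_ℂ).re = (⟪y, x⟫_ℂ).re := by
  rw [← inner_conj_symm y x, Complex.conj_re]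

variable {E : Type*} [NormedAddCommGroup E] [InnerProductSpace ℂ E] [CompleteSpace E]

lemma posdef_add_smul {A B : E →L[ℂ] E} (hA : IsPosDefCLM A) (hB : B.IsPositive)
    {t : ℝ} (ht : 0 ≤ t) : IsPosDefCLM (A + t • B) := by
  obtain ⟨hApos, c, hc, hcb⟩ := hA
  refine ⟨hApos.add (isPositive_real_smul hB ht), c, hc, fun x => ?_⟩
  have h1 := hcb x
  have h2 : 0 ≤ t * (⟪B x, x⟫_ℂ).re := by
    have := hB.2 x
    rw [reApplyInnerSelf_apply] at this
    exact mul_nonneg ht this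
  calc c * ‖x‖ ^ 2 ≤ (⟪A x, x⟫_ℂ).re + t * (⟪B x, x⟫_ℂ).re := by linarith
  _ = (⟪(A + t • B) x, x⟫_ℂ).re := by
      rw [add_apply, inner_add_left, Complex.add_re, re_inner_real_smul]

end aux

/-- A Fréchet-differentiable free function on tuples of positive definite operators is
operator monotone if and only if its Fréchet derivative `DF(X)(H)` is positive
semi-definite for every `X` in the domain and every tuple `H ≥ 0`. -/
theorem operator_monotone_iff_derivative_nonneg
    {E : Type*} [NormedAddCommGroup E] [InnerProductSpace ℂ E] [CompleteSpace E]
    (k : ℕ) (F : (Fin k → (E →L[ℂ] E)) → (E →L[ℂ] E))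
    (hsa : ∀ X : Fin k → (E →L[ℂ] E), (∀ i, IsPosDefCLM (X i)) → IsSelfAdjoint (F X))
    (DF : (Fin k → (E →L[ℂ] E)) → ((Fin k → (E →L[ℂ] E)) →L[ℝ] (E →L[ℂ] E)))
    (hdiff : ∀ X : Fin k → (E →L[ℂ] E), (∀ i, IsPosDefCLM (X i)) →
      HasFDerivAt (𝕜 := ℝ) F (DF X) X) :
    (∀ X Y : Fin k → (E →L[ℂ] E), (∀ i, IsPosDefCLM (X i)) → (∀ i, IsPosDefCLM (Y i)) →
        (∀ i, (X i - Y i).IsPositive) → (F X - F Y).IsPositive) ↔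
    (∀ X : Fin k → (E →L[ℂ] E), (∀ i, IsPosDefCLM (X i)) →
      ∀ H : Fin k → (E →L[ℂ] E), (∀ i, (H i).IsPositive) → (DF X H).IsPositive) := by
  constructor
  · intro hmono X hX H hH
    -- forward
    set G : ℝ → (E →L[ℂ] E) := fun t => t⁻¹ • (F (X + t • H) - F X) with hG
    have htend : Tendsto G (𝓝[>] (0:ℝ)) (𝓝 (DF X H)) :=
      ((hdiff X hX).hasLineDerivAt H).tendsto_slope_zero_right
    have hpos : ∀ t : ℝ, 0 < t → (G t).IsPositive := by
      intro t ht
      have hXt : ∀ i, IsPosDefCLM ((X + t • H) i) := by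
        intro i
        have : (X + t • H) i = X i + t • H i := rfl
        rw [this]
        exact posdef_add_smul (hX i) (hH i) ht.le
      have hdpos : (F (X + t • H) - F X).IsPositive := by
        refine hmono _ _ hXt hX fun i => ?_
        have : (X + t • H) i - X i = t • H i := by
          simp [Pi.add_apply, Pi.smul_apply]
        rw [this]
        exact isPositive_real_smul (hH i) ht.le
      exact isPositive_real_smul hdpos (inv_nonneg.2 ht.le)
    have hsa' : IsSelfAdjoint (DF X H) := by
      have hstarc : Continuous (star : (E →L[ℂ] E) → (E →L[ℂ] E)) := by
        have : (star : (E →L[ℂ] E) → (E →L[ℂ] E)) =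
            (ContinuousLinearMap.adjoint : (E →L[ℂ] E) ≃ₗᵢ⋆[ℂ] (E →L[ℂ] E)) := rfl
        rw [this]
        exact LinearIsometryEquiv.continuous _
      have h1 : Tendsto (fun t => star (G t)) (𝓝[>] (0:ℝ)) (𝓝 (star (DF X H))) :=
        (hstarc.tendsto _).comp htend
      have h2 : Tendsto (fun t => star (G t)) (𝓝[>] (0:ℝ)) (𝓝 (DF X H)) := by
        refine htend.congr' ?_
        filter_upwards [self_mem_nhdsWithin] with t ht
        exact ((hpos t ht).isSelfAdjoint.star_eq).symm
      exact tendsto_nhds_unique h1 h2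
    refine ⟨hsa'.isSymmetric, fun x => ?_⟩
    have hcont : Continuous fun A : E →L[ℂ] E => A.reApplyInnerSelf x := by
      simp only [ContinuousLinearMap.reApplyInnerSelf_apply]
      exact RCLike.continuous_re.comp
        (Continuous.inner ((ContinuousLinearMap.apply ℂ E x).continuous) continuous_const)
    have h3 : Tendsto (fun t => (G t).reApplyInnerSelf x) (𝓝[>] (0:ℝ))
        (𝓝 ((DF X H).reApplyInnerSelf x)) := (hcont.tendsto _).comp htend
    refine ge_of_tendsto h3 ?_
    filter_upwards [self_mem_nhdsWithin] with t ht
    exact (hpos t ht).2 x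
  · intro hder X Y hX hY hXY
    refine ⟨((hsa X hX).sub (hsa Y hY)).isSymmetric, fun x => ?_⟩
    set φ : (E →L[ℂ] E) →L[ℝ] ℝ :=
      Complex.reCLM.comp (((innerSL ℂ x).restrictScalars ℝ).comp
        ((ContinuousLinearMap.apply ℂ E x).restrictScalars ℝ)) with hφ
    have hφ_apply : ∀ A : E →L[ℂ] E, φ A = (⟪x, A x⟫_ℂ).re := fun A => rfl
    set c : ℝ → (Fin k → (E →L[ℂ] E)) := fun t => Y + t • (X - Y) with hc
    have hct : ∀ t ∈ Set.Icc (0:ℝ) 1, ∀ i, IsPosDefCLM (c t i) := by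
      intro t ht i
      have : c t i = Y i + t • (X i - Y i) := rfl
      rw [this]
      exact posdef_add_smul (hY i) (hXY i) ht.1
    have hcd : ∀ t : ℝ, HasDerivAt c (X - Y) t := by
      intro t
      simpa [hc] using ((hasDerivAt_id t).smul_const (X - Y)).const_add Y
    set g : ℝ → ℝ := fun t => φ (F (c t)) with hg
    have hgd : ∀ t ∈ Set.Icc (0:ℝ) 1,
        HasDerivAt g (φ (DF (c t) (X - Y))) t := by
      intro t ht
      have h1 : HasDerivAt (fun s => F (c s)) (DF (c t) (X - Y)) t :=
        (hdiff (c t) (hct t ht)).comp_hasDerivAt t (hcd t)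
      exact φ.hasFDerivAt.comp_hasDerivAt t h1
    have hmono : MonotoneOn g (Set.Icc (0:ℝ) 1) := by
      apply monotoneOn_of_deriv_nonneg (convex_Icc 0 1)
      · intro t ht
        exact (hgd t ht).continuousAt.continuousWithinAt
      · rw [interior_Icc]
        intro t ht
        exact ((hgd t (Set.Ioo_subset_Icc_self ht)).differentiableAt).differentiableWithinAt
      · rw [interior_Icc]
        intro t ht
        rw [(hgd t (Set.Ioo_subset_Icc_self ht)).deriv, hφ_apply]
        have hpos := hder (c t) (hct t (Set.Ioo_subset_Icc_self ht)) (X - Y)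
          (fun i => hXY i)
        have h2 := hpos.2 x
        rw [reApplyInnerSelf_apply] at h2
        rw [re_inner_symmC]
        exact h2
    have h01 : g 0 ≤ g 1 :=
      hmono (Set.left_mem_Icc.2 zero_le_one) (Set.right_mem_Icc.2 zero_le_one) zero_le_one
    have hc0 : c 0 = Y := by simp [hc]
    have hc1 : c 1 = X := by simp [hc]
    have hkey : (⟪(F X - F Y) x, x⟫_ℂ).re = g 1 - g 0 := by
      rw [hg]
      simp only [hc0, hc1, hφ_apply]
      rw [sub_apply, inner_sub_left, Complex.sub_re,
        re_inner_symmC x (F X x), re_inner_symmC x (F Y x)]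
    rw [reApplyInnerSelf_apply,
      show (RCLike.re ⟪(F X - F Y) x, x⟫_ℂ : ℝ) = (⟪(F X - F Y) x, x⟫_ℂ).re from rfl, hkey]
    linarith
end
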